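/- arXiv:2506.15444 — 7 statements merged into one kernel-verified Lean document; each statement's English description precedes it below -/
import Mathlib

section
/- Let (ω_k)_{k≥1} be a sequence in the open unit disk 𝔻 and let m : ℕ* × ℕ* → ℂ be an infinite upper-triangular matrix with m(i,i) = ωᵢ for all i ≥ 1, m(i,i+1) = √(1 − |ωᵢ|²)·√(1 − |ω_{i+1}|²) for all i ≥ 1, and m(i,j) = 0 for i > j. Then there exists a bounded linear operator T on ℓ²(ℕ*) with ‖T‖ ≤ 1 whose matrix in the canonical orthonormal basis (e_k) satisfies ⟨T e_j, e_i⟩ = m(i,j) for all i, j, if and only if m(i, i+j) = (∏_{k=i+1}^{i+j−1} (−conj(ω_k)))·√(1 − |ωᵢ|²)·√(1 − |ω_{i+j}|²) for all i ≥ 1 and j ≥ 1 (empty product equal to 1). -/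
open scoped ComplexConjugate ENNReal
namespace InfContr

lemma Ioo_succ_right' {a b : ℕ+} (h : a < b) :
    Finset.Ioo a (b + 1) = insert b (Finset.Ioo a b) := by
  ext x
  simp only [Finset.mem_Ioo, Finset.mem_insert, PNat.lt_add_one_iff]
  constructor
  · rintro ⟨h1, h2⟩
    rcases eq_or_lt_of_le h2 with rfl | h3
    · exact Or.inl rfl
    · exact Or.inr ⟨h1, h3⟩
  · rintro (rfl | ⟨h1, h2⟩)
    · exact ⟨h, le_refl _⟩
    · exact ⟨h1, le_of_lt h2⟩

lemma Ico_succ_right' {a b : ℕ+} (h : a ≤ b) :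
    Finset.Ico a (b + 1) = insert b (Finset.Ico a b) := by
  ext x
  simp only [Finset.mem_Ico, Finset.mem_insert, PNat.lt_add_one_iff]
  constructor
  · rintro ⟨h1, h2⟩
    rcases eq_or_lt_of_le h2 with rfl | h3
    · exact Or.inl rfl
    · exact Or.inr ⟨h1, h3⟩
  · rintro (rfl | ⟨h1, h2⟩)
    · exact ⟨h, le_refl _⟩
    · exact ⟨h1, le_of_lt h2⟩

lemma Ioo_succ_self (a : ℕ+) : Finset.Ioo a (a + 1) = ∅ := by
  ext x
  simp only [Finset.mem_Ioo, Finset.notMem_empty, iff_false, not_and, PNat.lt_add_one_iff]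
  exact fun h1 => not_le_of_gt h1

lemma le_induction' {a : ℕ+} {P : ℕ+ → Prop} (base : P a)
    (step : ∀ b, a ≤ b → P b → P (b + 1)) : ∀ b, a ≤ b → P b := by
  intro b
  induction b using PNat.strongInductionOn with
  | _ b ih =>
    intro hab
    rcases eq_or_lt_of_le hab with rfl | hlt
    · exact base
    · have h1b : (1 : ℕ+) < b := lt_of_le_of_lt a.one_le hlt
      have hb : (b - 1) + 1 = b := by
        rw [add_comm]; exact PNat.add_sub_of_lt h1b
      have hlt' : b - 1 < b := by
        conv_rhs => rw [← hb]
        exact PNat.lt_add_right _ _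
      have hab' : a ≤ b - 1 := by
        rw [← PNat.lt_add_one_iff, hb]; exact hlt
      rw [← hb]
      exact step _ hab' (ih _ hlt' hab')

lemma Ioo_union (k a b : ℕ+) (hka : k < a) (hab : a ≤ b) :
    Finset.Ioo k a ∪ Finset.Ico a b = Finset.Ioo k b := by
  ext x
  simp only [Finset.mem_union, Finset.mem_Ioo, Finset.mem_Ico]
  constructor
  · rintro (⟨h1, h2⟩ | ⟨h1, h2⟩)
    · exact ⟨h1, lt_of_lt_of_le h2 hab⟩
    · exact ⟨lt_of_lt_of_le hka h1, h2⟩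
  · rintro ⟨h1, h2⟩
    rcases lt_or_ge x a with h3 | h3
    · exact Or.inl ⟨h1, h3⟩
    · exact Or.inr ⟨h3, h2⟩

section Model

variable (ω : ℕ+ → ℂ)

/-- `√(1 - |ω i|²)`. -/
noncomputable def sr (i : ℕ+) : ℝ := Real.sqrt (1 - ‖ω i‖ ^ 2)

/-- Unnormalized model column entry. -/
noncomputable def NN (k b : ℕ+) : ℂ :=
  (∏ l ∈ Finset.Ioo k b, -(conj (ω l))) * (sr ω k : ℝ)

/-- The model matrix. -/
noncomputable def MM (i j : ℕ+) : ℂ :=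
  if i = j then ω i else if i < j then NN ω i j * (sr ω j : ℝ) else 0

/-- The defect vector entries. -/
noncomputable def WW (i a : ℕ+) : ℂ :=
  (∏ l ∈ Finset.Ico i a, -(conj (ω l))) * (sr ω a : ℝ)

variable (hω : ∀ k, ‖ω k‖ < 1)
include hω

lemma sr_pos (i : ℕ+) : 0 < sr ω i := by
  apply Real.sqrt_pos.mpr
  have h := hω i
  have h0 : (0:ℝ) ≤ ‖ω i‖ := norm_nonneg _
  nlinarith

lemma sr_sq (i : ℕ+) : (sr ω i : ℝ) ^ 2 = 1 - ‖ω i‖ ^ 2 := by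
  apply Real.sq_sqrt
  have h := hω i
  have h0 : (0:ℝ) ≤ ‖ω i‖ := norm_nonneg _
  nlinarith

/-- Key identity in `ℂ`: `s_i² + conj ω_i * ω_i = 1`. -/
lemma sr_key (i : ℕ+) : (sr ω i : ℂ) * (sr ω i : ℂ) + conj (ω i) * ω i = 1 := by
  have h1 : conj (ω i) * ω i = ((‖ω i‖ ^ 2 : ℝ) : ℂ) := by
    rw [← Complex.normSq_eq_conj_mul_self, Complex.normSq_eq_norm_sq]
  have h2 := sr_sq ω hω i
  rw [h1, ← Complex.ofReal_mul, ← Complex.ofReal_add]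
  norm_cast
  nlinarith [h2]

/-- Diagonal sum identity. -/
lemma diagSum : ∀ b, ∀ i, i ≤ b →
    ∑ k ∈ Finset.Ico i b, conj (NN ω k b) * NN ω k b
      = 1 - ∏ l ∈ Finset.Ico i b, conj (ω l) * ω l := by
  have main : ∀ i, ∀ b, i ≤ b → ∑ k ∈ Finset.Ico i b, conj (NN ω k b) * NN ω k b
      = 1 - ∏ l ∈ Finset.Ico i b, conj (ω l) * ω l := by
    intro i
    apply le_induction'
    · simp
    · intro b hib IH
      have hbb : b ∉ Finset.Ico i b := by simp
      rw [Ico_succ_right' hib, Finset.sum_insert hbb, Finset.prod_insert hbb]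
      have hNb : NN ω b (b + 1) = (sr ω b : ℝ) := by
        rw [NN, Ioo_succ_self]; simp
      have hNk : ∀ k ∈ Finset.Ico i b, NN ω k (b + 1) = -(conj (ω b)) * NN ω k b := by
        intro k hk
        have hkb : k < b := (Finset.mem_Ico.mp hk).2
        rw [NN, NN, Ioo_succ_right' hkb, Finset.prod_insert (by simp)]
        ring
      rw [Finset.sum_congr rfl (fun k hk => by rw [hNk k hk])]
      have : ∑ k ∈ Finset.Ico i b, conj (-(conj (ω b)) * NN ω k b) * (-(conj (ω b)) * NN ω k b)
          = (conj (ω b) * ω b) * ∑ k ∈ Finset.Ico i b, conj (NN ω k b) * NN ω k b := by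
        rw [Finset.mul_sum]
        apply Finset.sum_congr rfl
        intro k _
        simp only [map_mul, map_neg, Complex.conj_conj]
        ring
      rw [this, IH, hNb]
      have key := sr_key ω hω b
      have hc : conj ((sr ω b : ℝ) : ℂ) = ((sr ω b : ℝ) : ℂ) := Complex.conj_ofReal _
      rw [hc]
      linear_combination key
  exact fun b i h => main i b h

omit hω in
lemma MM_lt {k j : ℕ+} (h : k < j) : MM ω k j = NN ω k j * ((sr ω j : ℝ) : ℂ) := by
  rw [MM, if_neg (ne_of_lt h), if_pos h]

omit hω in
lemma MM_gt {k j : ℕ+} (h : j < k) : MM ω k j = 0 := by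
  rw [MM, if_neg (ne_of_gt h), if_neg (not_lt_of_gt h)]

omit hω in
lemma MM_diag (k : ℕ+) : MM ω k k = ω k := by rw [MM, if_pos rfl]

lemma crossN (i a b : ℕ+) (hia : i ≤ a) (hab : a ≤ b) :
    ∑ k ∈ Finset.Ico i a, conj (NN ω k a) * NN ω k b
      = (∏ l ∈ Finset.Ico a b, -(conj (ω l))) *
        (1 - ∏ l ∈ Finset.Ico i a, conj (ω l) * ω l) := by
  have hsplit : ∀ k ∈ Finset.Ico i a,
      conj (NN ω k a) * NN ω k b
        = (∏ l ∈ Finset.Ico a b, -(conj (ω l))) * (conj (NN ω k a) * NN ω k a) := by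
    intro k hk
    have hka : k < a := (Finset.mem_Ico.mp hk).2
    have hdisj : Disjoint (Finset.Ioo k a) (Finset.Ico a b) := by
      rw [Finset.disjoint_left]
      intro x hx hx'
      exact absurd (Finset.mem_Ico.mp hx').1 (not_le_of_gt (Finset.mem_Ioo.mp hx).2)
    have hNb : NN ω k b = NN ω k a * ∏ l ∈ Finset.Ico a b, -(conj (ω l)) := by
      rw [NN, NN, ← Ioo_union k a b hka hab, Finset.prod_union hdisj]
      ring
    rw [hNb]; ring
  rw [Finset.sum_congr rfl hsplit, ← Finset.mul_sum, diagSum ω hω a i hia]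

lemma gram (i a b : ℕ+) (hia : i ≤ a) (hab : a ≤ b) :
    ∑ k ∈ Finset.Icc i a, conj (MM ω k a) * MM ω k b
      = (if a = b then 1 else 0) - conj (WW ω i a) * WW ω i b := by
  have hiA : a ∉ Finset.Ico i a := by simp
  rw [← Finset.Ico_insert_right hia, Finset.sum_insert hiA]
  have hMlow : ∀ k ∈ Finset.Ico i a, conj (MM ω k a) * MM ω k b
      = ((sr ω a : ℝ) : ℂ) * ((sr ω b : ℝ) : ℂ) * (conj (NN ω k a) * NN ω k b) := by
    intro k hk
    have hka : k < a := (Finset.mem_Ico.mp hk).2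
    rw [MM_lt ω hka, MM_lt ω (lt_of_lt_of_le hka hab), map_mul, Complex.conj_ofReal]
    ring
  rw [Finset.sum_congr rfl hMlow, ← Finset.mul_sum, crossN ω hω i a b hia hab]
  have hprod : (∏ l ∈ Finset.Ico i a, -(ω l)) * (∏ l ∈ Finset.Ico i a, -(conj (ω l)))
      = ∏ l ∈ Finset.Ico i a, conj (ω l) * ω l := by
    rw [← Finset.prod_mul_distrib]
    exact Finset.prod_congr rfl fun l _ => by ring
  have hWc : conj (WW ω i a) = (∏ l ∈ Finset.Ico i a, -(ω l)) * ((sr ω a : ℝ) : ℂ) := by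
    rw [WW, map_mul, map_prod, Complex.conj_ofReal]
    congr 1
    exact Finset.prod_congr rfl fun l _ => by simp
  have key := sr_key ω hω a
  rcases eq_or_lt_of_le hab with rfl | hlt
  · rw [if_pos rfl, MM_diag, hWc, WW]
    simp only [Finset.Ico_self, Finset.prod_empty, one_mul]
    linear_combination key + (((sr ω a : ℝ) : ℂ) * ((sr ω a : ℝ) : ℂ)) * hprod
  · rw [if_neg (ne_of_lt hlt), MM_diag, MM_lt ω hlt, hWc, WW, NN]
    have hsplit2 : ∏ l ∈ Finset.Ico i b, -(conj (ω l))
        = (∏ l ∈ Finset.Ico i a, -(conj (ω l))) * ∏ l ∈ Finset.Ico a b, -(conj (ω l)) := by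
      rw [← Finset.prod_union (Finset.Ico_disjoint_Ico_consecutive i a b),
        Finset.Ico_union_Ico_eq_Ico hia hab]
    have hsplit3 : ∏ l ∈ Finset.Ico a b, -(conj (ω l))
        = -(conj (ω a)) * ∏ l ∈ Finset.Ioo a b, -(conj (ω l)) := by
      rw [← Finset.Ioo_insert_left hlt, Finset.prod_insert (by simp)]
    rw [hsplit2, hsplit3]
    linear_combination (-(conj (ω a)) * (∏ l ∈ Finset.Ioo a b, -(conj (ω l))) *
      ((sr ω a : ℝ) : ℂ) * ((sr ω b : ℝ) : ℂ)) * hprod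

/-! ### The lp-space layer -/

/-- The `j`-th column of the model matrix, as an element of `ℓ²`. -/
noncomputable def col (j : ℕ+) : lp (fun _ : ℕ+ => ℂ) 2 :=
  ∑ k ∈ Finset.Icc 1 j, lp.single 2 k (MM ω k j)

omit hω in
lemma col_apply (i j : ℕ+) : (col ω j : ∀ _ : ℕ+, ℂ) i = MM ω i j := by
  rw [col]
  simp only [lp.coeFn_sum, Finset.sum_apply, lp.single_apply, Finset.sum_dite_eq, Pi.single_apply, Finset.sum_ite_eq, Finset.sum_ite_eq']
  by_cases h : i ∈ Finset.Icc 1 j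
  · rw [if_pos h]
  · rw [if_neg h, MM_gt]
    have h2 : ¬ i ≤ j := fun hc => h (Finset.mem_Icc.mpr ⟨i.one_le, hc⟩)
    exact lt_of_not_ge h2

omit hω in
lemma inner_single_col (i j : ℕ+) :
    (inner ℂ (lp.single 2 i (1 : ℂ)) (col ω j) : ℂ) = MM ω i j := by
  rw [lp.inner_single_left, RCLike.inner_apply, col_apply]
  simp

omit hω in
lemma inner_single_right' (f : lp (fun _ : ℕ+ => ℂ) 2) (i : ℕ+) (a : ℂ) :
    (inner ℂ (lp.single 2 i a) f : ℂ) = conj a * (f : ∀ _ : ℕ+, ℂ) i := by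
  rw [lp.inner_single_left, RCLike.inner_apply]
  exact mul_comm _ _

lemma inner_col_col_le {a b : ℕ+} (hab : a ≤ b) :
    (inner ℂ (col ω a) (col ω b) : ℂ)
      = (if a = b then 1 else 0) - conj (WW ω 1 a) * WW ω 1 b := by
  rw [col, sum_inner]
  have : ∀ k ∈ Finset.Icc 1 a,
      (inner ℂ (lp.single 2 k (MM ω k a)) (col ω b) : ℂ) = conj (MM ω k a) * MM ω k b := by
    intro k _
    rw [inner_single_right', col_apply]
  rw [Finset.sum_congr rfl this]
  exact gram ω hω 1 a b a.one_le hab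

lemma inner_col_col (a b : ℕ+) :
    (inner ℂ (col ω a) (col ω b) : ℂ)
      = (if a = b then 1 else 0) - conj (WW ω 1 a) * WW ω 1 b := by
  rcases le_or_gt a b with hab | hba
  · exact inner_col_col_le ω hω hab
  · rw [← inner_conj_symm, inner_col_col_le ω hω (le_of_lt hba)]
    rw [if_neg (ne_of_lt hba)]
    rw [if_neg (ne_of_gt hba)]
    simp only [map_sub, map_zero, map_mul, Complex.conj_conj]
    ring

/-- The fundamental Gram estimate: finite combinations of columns are contractive. -/
lemma norm_sum_col_sq_le (F : Finset ℕ+) (x : ℕ+ → ℂ) :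
    ‖∑ j ∈ F, x j • col ω j‖ ^ 2 ≤ ∑ j ∈ F, ‖x j‖ ^ 2 := by
  set S := ∑ j ∈ F, x j • col ω j with hS
  set t := ∑ j ∈ F, x j * WW ω 1 j with ht
  have h1 : (inner ℂ S S : ℂ) = ((∑ j ∈ F, ‖x j‖ ^ 2 : ℝ) : ℂ) - conj t * t := by
    rw [hS, sum_inner]
    have e1 : ∀ a ∈ F, (inner ℂ (x a • col ω a) (∑ j ∈ F, x j • col ω j) : ℂ)
        = ∑ b ∈ F, conj (x a) * x b *
            ((if a = b then 1 else 0) - conj (WW ω 1 a) * WW ω 1 b) := by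
      intro a _
      rw [inner_sum]
      apply Finset.sum_congr rfl
      intro b _
      rw [inner_smul_left, inner_smul_right, inner_col_col ω hω]
      ring
    rw [Finset.sum_congr rfl e1]
    have e2 : ∀ a ∈ F, (∑ b ∈ F, conj (x a) * x b *
        ((if a = b then 1 else 0) - conj (WW ω 1 a) * WW ω 1 b))
        = (∑ b ∈ F, if a = b then conj (x a) * x b else 0)
          - (conj (x a) * conj (WW ω 1 a)) * ∑ b ∈ F, x b * WW ω 1 b := by
      intro a _
      rw [Finset.mul_sum, ← Finset.sum_sub_distrib]
      apply Finset.sum_congr rfl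
      intro b _
      split_ifs with h
      · ring
      · ring
    rw [Finset.sum_congr rfl e2, Finset.sum_sub_distrib]
    have e3 : ∀ a ∈ F, (∑ b ∈ F, if a = b then conj (x a) * x b else 0)
        = ((‖x a‖ ^ 2 : ℝ) : ℂ) := by
      intro a ha
      rw [Finset.sum_ite_eq F a (fun b => conj (x a) * x b), if_pos ha,
        ← Complex.normSq_eq_conj_mul_self]
      norm_cast
      rw [Complex.normSq_eq_norm_sq]
    rw [Finset.sum_congr rfl e3]
    have e4 : ∑ a ∈ F, (conj (x a) * conj (WW ω 1 a)) * ∑ b ∈ F, x b * WW ω 1 b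
        = conj t * t := by
      rw [← Finset.sum_mul, ht]
      congr 1
      rw [map_sum]
      exact Finset.sum_congr rfl fun a _ => by rw [map_mul]
    rw [e4]
    push_cast
    ring
  have h4 : ‖S‖ ^ 2 = (∑ j ∈ F, ‖x j‖ ^ 2) - Complex.normSq t := by
    have h5 := inner_self_eq_norm_sq (𝕜 := ℂ) S
    rw [h1, ← Complex.normSq_eq_conj_mul_self] at h5
    rw [← h5]
    simp [RCLike.re_to_complex, ← Complex.ofReal_pow]
  have h6 := Complex.normSq_nonneg t
  linarith

omit hω in
lemma sum_sq_le_norm_sq (f : lp (fun _ : ℕ+ => ℂ) 2) (s : Finset ℕ+) :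
    ∑ j ∈ s, ‖(f : ∀ _ : ℕ+, ℂ) j‖ ^ 2 ≤ ‖f‖ ^ 2 := by
  have h0 : (0:ℝ) < (2 : ℝ≥0∞).toReal := by norm_num
  have h1 := lp.norm_rpow_eq_tsum h0 f
  have h2 : ∀ j : ℕ+, ‖(f : ∀ _ : ℕ+, ℂ) j‖ ^ (2 : ℝ≥0∞).toReal
      = ‖(f : ∀ _ : ℕ+, ℂ) j‖ ^ (2 : ℕ) := by
    intro j
    rw [show (2 : ℝ≥0∞).toReal = ((2:ℕ) : ℝ) by norm_num, Real.rpow_natCast]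
  have h3 : ‖f‖ ^ (2:ℕ) = ∑' j : ℕ+, ‖(f : ∀ _ : ℕ+, ℂ) j‖ ^ (2:ℕ) := by
    rw [show ‖f‖ ^ (2:ℕ) = ‖f‖ ^ ((2:ℕ):ℝ) by rw [Real.rpow_natCast],
      show ((2:ℕ):ℝ) = (2 : ℝ≥0∞).toReal by norm_num, h1]
    exact tsum_congr h2
  rw [h3]
  apply Summable.sum_le_tsum s (fun j _ => by positivity)
  have h4 := (lp.memℓp f).summable h0
  exact h4.congr h2

omit hω in
lemma summable_sq (f : lp (fun _ : ℕ+ => ℂ) 2) :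
    Summable (fun j : ℕ+ => ‖(f : ∀ _ : ℕ+, ℂ) j‖ ^ (2:ℕ)) := by
  have h0 : (0:ℝ) < (2 : ℝ≥0∞).toReal := by norm_num
  exact ((lp.memℓp f).summable h0).congr fun j => by
    rw [show (2 : ℝ≥0∞).toReal = ((2:ℕ) : ℝ) by norm_num, Real.rpow_natCast]

lemma summable_col (f : lp (fun _ : ℕ+ => ℂ) 2) :
    Summable (fun j : ℕ+ => (f : ∀ _ : ℕ+, ℂ) j • col ω j) := by
  rw [summable_iff_vanishing]
  intro e he
  rcases Metric.mem_nhds_iff.mp he with ⟨ε, hε, hball⟩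
  have hsum := summable_sq f
  obtain ⟨s, hs⟩ := summable_iff_vanishing.mp hsum (Metric.ball (0:ℝ) (ε ^ 2))
    (Metric.ball_mem_nhds _ (by positivity))
  refine ⟨s, fun t hts => ?_⟩
  apply hball
  rw [mem_ball_zero_iff]
  have h1 := norm_sum_col_sq_le ω hω t (fun j => (f : ∀ _ : ℕ+, ℂ) j)
  have h2 := hs t hts
  rw [Metric.mem_ball, Real.dist_eq, sub_zero] at h2
  have h3 : ∑ j ∈ t, ‖(f : ∀ _ : ℕ+, ℂ) j‖ ^ 2 < ε ^ 2 := by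
    calc ∑ j ∈ t, ‖(f : ∀ _ : ℕ+, ℂ) j‖ ^ 2
        ≤ |∑ j ∈ t, ‖(f : ∀ _ : ℕ+, ℂ) j‖ ^ 2| := le_abs_self _
      _ < ε ^ 2 := h2
  have h4 : ‖∑ j ∈ t, (f : ∀ _ : ℕ+, ℂ) j • col ω j‖ ^ 2 < ε ^ 2 := lt_of_le_of_lt h1 h3
  exact lt_of_pow_lt_pow_left₀ 2 (le_of_lt hε) h4

omit hω in
/-- The contraction, as a plain function. -/
noncomputable def Tfun (f : lp (fun _ : ℕ+ => ℂ) 2) : lp (fun _ : ℕ+ => ℂ) 2 :=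
  ∑' j : ℕ+, (f : ∀ _ : ℕ+, ℂ) j • col ω j

lemma Tfun_norm_le (f : lp (fun _ : ℕ+ => ℂ) 2) : ‖Tfun ω f‖ ≤ ‖f‖ := by
  have hsum : HasSum (fun j : ℕ+ => (f : ∀ _ : ℕ+, ℂ) j • col ω j) (Tfun ω f) :=
    (summable_col ω hω f).hasSum
  have ht : Filter.Tendsto (fun s : Finset ℕ+ => ‖∑ j ∈ s, (f : ∀ _ : ℕ+, ℂ) j • col ω j‖)
      Filter.atTop (nhds ‖Tfun ω f‖) := Filter.Tendsto.norm hsum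
  refine le_of_tendsto ht (Filter.Eventually.of_forall fun s => ?_)
  have h1 := norm_sum_col_sq_le ω hω s (fun j => (f : ∀ _ : ℕ+, ℂ) j)
  have h2 := sum_sq_le_norm_sq f s
  exact le_of_pow_le_pow_left₀ (by norm_num) (norm_nonneg f) (le_trans h1 h2)

/-- The contraction, as a linear map. -/
noncomputable def Tlin : lp (fun _ : ℕ+ => ℂ) 2 →ₗ[ℂ] lp (fun _ : ℕ+ => ℂ) 2 where
  toFun := Tfun ω
  map_add' f g := by
    have hf := summable_col ω hω f
    have hg := summable_col ω hω g
    simp only [Tfun]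
    rw [← Summable.tsum_add hf hg]
    apply tsum_congr
    intro j
    rw [lp.coeFn_add, Pi.add_apply, add_smul]
  map_smul' c f := by
    have hf := summable_col ω hω f
    simp only [Tfun, RingHom.id_apply]
    rw [← Summable.tsum_const_smul c hf]
    apply tsum_congr
    intro j
    rw [lp.coeFn_smul, Pi.smul_apply, smul_eq_mul, smul_smul]

/-- The contraction. -/
noncomputable def Tclm : lp (fun _ : ℕ+ => ℂ) 2 →L[ℂ] lp (fun _ : ℕ+ => ℂ) 2 :=
  LinearMap.mkContinuous (Tlin ω hω) 1 (fun f => by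
    show ‖Tfun ω f‖ ≤ 1 * ‖f‖
    simpa using Tfun_norm_le ω hω f)

lemma Tclm_norm_le : ‖Tclm ω hω‖ ≤ 1 :=
  LinearMap.mkContinuous_norm_le _ zero_le_one _

lemma Tclm_entry (i j : ℕ+) :
    (inner ℂ (lp.single 2 i (1:ℂ)) (Tclm ω hω (lp.single 2 j (1:ℂ))) : ℂ) = MM ω i j := by
  have h1 : Tclm ω hω (lp.single 2 j (1:ℂ)) = col ω j := by
    show Tfun ω (lp.single 2 j (1:ℂ)) = col ω j
    rw [Tfun]
    rw [tsum_eq_single j (fun b hb => ?_)]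
    · rw [lp.single_apply_self, one_smul]
    · rw [lp.single_apply_ne 2 j _ hb, zero_smul]
  rw [h1, inner_single_col]

omit hω in
lemma inner_single_single (a b : ℕ+) (x y : ℂ) :
    (inner ℂ (lp.single 2 a x) ((lp.single 2 b y : lp (fun _ : ℕ+ => ℂ) 2)) : ℂ)
      = if a = b then conj x * y else 0 := by
  rw [inner_single_right']
  by_cases h : a = b
  · subst h
    rw [if_pos rfl, lp.single_apply_self]
  · rw [if_neg h, lp.single_apply_ne 2 b _ h, mul_zero]

omit hω in
lemma orthonormal_single : Orthonormal ℂ (fun i : ℕ+ => lp.single 2 i (1 : ℂ)) := by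
  rw [orthonormal_iff_ite]
  intro i j
  rw [inner_single_single]
  split_ifs with h
  · simp
  · rfl

omit hω in
lemma normSq_ofReal_mul (w : ℂ) : conj w * w = ((Complex.normSq w : ℝ) : ℂ) := by
  rw [Complex.normSq_eq_conj_mul_self]

/-- The key uniqueness ("forcing") lemma. -/
lemma forced (m : ℕ+ → ℕ+ → ℂ)
    (T : lp (fun _ : ℕ+ => ℂ) 2 →L[ℂ] lp (fun _ : ℕ+ => ℂ) 2)
    (hT : ‖T‖ ≤ 1)
    (hent : ∀ i j : ℕ+, (inner ℂ (lp.single 2 i 1) (T (lp.single 2 j 1)) : ℂ) = m i j)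
    (hdiag : ∀ i, m i i = ω i)
    (hsuper : ∀ i : ℕ+, m i (i + 1) = ((sr ω i * sr ω (i + 1) : ℝ) : ℂ))
    (hlow : ∀ i j : ℕ+, j < i → m i j = 0) :
    ∀ j i : ℕ+, m i (i + j) = MM ω i (i + j) := by
  intro j
  induction j using PNat.strongInductionOn with
  | _ j IH =>
  intro i
  rcases eq_or_lt_of_le j.one_le with rfl | hj1
  · -- base case: superdiagonal
    rw [hsuper i, MM_lt ω (PNat.lt_add_right i 1), NN, Ioo_succ_self]
    push_cast
    ring
  · -- main case: 1 < j
    set i1 : ℕ+ := i + 1 with hi1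
    set b : ℕ+ := i + j with hb
    have hib : i < b := PNat.lt_add_right i j
    have hii1 : i < i1 := PNat.lt_add_right i 1
    have hi1b : i1 < b := by
      rw [hi1, hb]
      exact add_lt_add_right hj1 i
    have hi1b' : i1 ≤ b := le_of_lt hi1b
    have hib' : i ≤ b := le_of_lt hib
    have hii1' : i ≤ i1 := le_of_lt hii1
    -- entries of rows in the window
    have hrow : ∀ r, i < r → r ≤ b → m r b = MM ω r b := by
      intro r hir hrb
      rcases eq_or_lt_of_le hrb with rfl | hrb'
      · rw [hdiag, MM_diag]
      · have hex : ∃ d : ℕ+, r + d = b ∧ d < j := by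
          refine ⟨b - r, PNat.add_sub_of_lt hrb', ?_⟩
          rw [← PNat.coe_lt_coe _ j, PNat.sub_coe, if_pos hrb']
          have e1 : (b : ℕ) = (i : ℕ) + (j : ℕ) := by rw [hb]; exact PNat.add_coe i j
          have e2 : (i : ℕ) < (r : ℕ) := (PNat.coe_lt_coe i r).mpr hir
          have e3 : (r : ℕ) < (b : ℕ) := (PNat.coe_lt_coe r b).mpr hrb'
          have e4 : 0 < (j : ℕ) := j.pos
          omega
        obtain ⟨d, hd, hdj⟩ := hex
        rw [← hd]
        exact IH d hdj r
    have hcol_i : ∀ r, i ≤ r → m r i = MM ω r i := by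
      intro r hr
      rcases eq_or_lt_of_le hr with rfl | h
      · rw [hdiag, MM_diag]
      · rw [hlow _ _ h, MM_gt ω h]
    have hMi1 : MM ω i i1 = ((sr ω i : ℝ) : ℂ) * ((sr ω i1 : ℝ) : ℂ) := by
      rw [MM_lt ω hii1, NN, hi1, Ioo_succ_self]
      push_cast
      ring
    have hcol_i1 : ∀ r, i ≤ r → m r i1 = MM ω r i1 := by
      intro r hr
      rcases eq_or_lt_of_le hr with rfl | h
      · rw [hi1, hsuper, ← hi1, hMi1]
        push_cast
        ring
      · have h1r : i1 ≤ r := by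
          rw [hi1]
          exact PNat.add_one_le_iff.mpr h
        rcases eq_or_lt_of_le h1r with rfl | h2
        · rw [hdiag, MM_diag]
        · rw [hlow _ _ h2, MM_gt ω h2]
    -- the data of the forcing vector
    set Sa : ℂ := ((sr ω i : ℝ) : ℂ) with hSa
    set Sb : ℂ := ((sr ω i1 : ℝ) : ℂ) with hSb
    set K : ℂ := MM ω i b with hK
    set δ : ℂ := m i b - K with hδ
    set Wc : ℂ := WW ω i b with hWc
    set z1 : ℂ := -(Wc * Sa) + conj (ω i) * (δ - K) with hz1
    set z2 : ℂ := (Sa * (δ - K) + ω i * Wc) / Sb with hz2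
    have hSb_ne : Sb ≠ 0 := by
      rw [hSb]
      exact_mod_cast ne_of_gt (sr_pos ω hω i1)
    have keyi := sr_key ω hω i
    have hWii : WW ω i i = Sa := by
      rw [WW, Finset.Ico_self, Finset.prod_empty, one_mul]
    have hWii1 : WW ω i i1 = -(conj (ω i)) * Sb := by
      have hIco : Finset.Ico i i1 = {i} := by
        rw [hi1, Ico_succ_right' (le_refl i), Finset.Ico_self]
        simp
      rw [WW, hIco, Finset.prod_singleton]
    have hC1 : z1 * WW ω i i + z2 * WW ω i i1 + Wc = 0 := by
      rw [hWii, hWii1, hz1, hz2]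
      field_simp
      linear_combination (-(Wc)) * keyi
    have hC2 : z1 * ω i + z2 * (Sa * Sb) + K = δ := by
      rw [hz1, hz2]
      field_simp
      linear_combination (δ - K) * keyi
    -- the test vector
    have hibne : i ≠ b := ne_of_lt hib
    have hii1ne : i ≠ i1 := ne_of_lt hii1
    have hi1bne : i1 ≠ b := ne_of_lt hi1b
    set u : lp (fun _ : ℕ+ => ℂ) 2 :=
      z1 • lp.single 2 i 1 + z2 • lp.single 2 i1 1 + lp.single 2 b 1 with hu
    have huu : (inner ℂ u u : ℂ) = conj z1 * z1 + conj z2 * z2 + 1 := by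
      rw [hu]
      simp only [inner_add_left, inner_add_right, inner_smul_left, inner_smul_right,
        inner_single_single, smul_eq_mul]
      simp only [if_neg hii1ne, if_neg hibne, if_neg hi1bne, if_neg (Ne.symm hii1ne),
        if_neg (Ne.symm hibne), if_neg (Ne.symm hi1bne), eq_self_iff_true, if_true,
        map_one, mul_one, mul_zero, zero_mul, add_zero, zero_add]
      ring
    have hnormu : ‖u‖ ^ 2 = Complex.normSq z1 + Complex.normSq z2 + 1 := by
      have h5 := inner_self_eq_norm_sq (𝕜 := ℂ) u
      rw [huu, normSq_ofReal_mul, normSq_ofReal_mul] at h5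
      rw [← h5]
      simp [RCLike.re_to_complex]
    -- entries of T u
    have hTu : ∀ r : ℕ+, (inner ℂ (lp.single 2 r (1:ℂ)) (T u) : ℂ)
        = z1 * m r i + z2 * m r i1 + m r b := by
      intro r
      rw [hu, map_add, map_add, map_smul, map_smul, inner_add_right, inner_add_right,
        inner_smul_right, inner_smul_right, hent, hent, hent]
    set A : ℕ+ → ℂ := fun r => z1 * MM ω r i + z2 * MM ω r i1 + MM ω r b with hA
    have hG : ∀ r ∈ Finset.Icc i b, (inner ℂ (lp.single 2 r (1:ℂ)) (T u) : ℂ)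
        = A r + (if r = i then δ else 0) := by
      intro r hr
      obtain ⟨hr1, hr2⟩ := Finset.mem_Icc.mp hr
      rw [hTu r, hA]
      by_cases hri : r = i
      · subst hri
        rw [if_pos rfl, hcol_i r (le_refl r), hcol_i1 r (le_refl r)]
        simp only []
        rw [hδ]
        ring
      · rw [if_neg hri, hcol_i r hr1, hcol_i1 r hr1,
          hrow r (lt_of_le_of_ne hr1 (Ne.symm hri)) hr2]
        ring
    -- Gram values over the window
    have hGm : ∀ a c : ℕ+, i ≤ a → a ≤ b → a ≤ c →
        ∑ r ∈ Finset.Icc i b, conj (MM ω r a) * MM ω r c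
          = (if a = c then 1 else 0) - conj (WW ω i a) * WW ω i c := by
      intro a c ha1 ha2 hac
      rw [← Finset.sum_subset (Finset.Icc_subset_Icc_right ha2)
        (fun r hr hr2 => ?_)]
      · exact gram ω hω i a c ha1 hac
      · have har : a < r := by
          rcases Finset.mem_Icc.mp hr with ⟨h1, h2⟩
          by_contra hcon
          exact hr2 (Finset.mem_Icc.mpr ⟨h1, le_of_not_gt hcon⟩)
        rw [MM_gt ω har, map_zero, zero_mul]
    have hGmSym : ∀ a c : ℕ+, i ≤ a → a ≤ b → i ≤ c → c ≤ b →
        ∑ r ∈ Finset.Icc i b, conj (MM ω r a) * MM ω r c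
          = (if a = c then 1 else 0) - conj (WW ω i a) * WW ω i c := by
      intro a c ha1 ha2 hc1 hc2
      rcases le_or_gt a c with h | h
      · exact hGm a c ha1 ha2 h
      · have h2 := hGm c a hc1 hc2 (le_of_lt h)
        have h3 : ∑ r ∈ Finset.Icc i b, conj (MM ω r a) * MM ω r c
            = conj (∑ r ∈ Finset.Icc i b, conj (MM ω r c) * MM ω r a) := by
          rw [map_sum]
          exact Finset.sum_congr rfl fun r _ => by
            rw [map_mul, Complex.conj_conj]; ring
        rw [h3, h2, if_neg (ne_of_lt h), if_neg (ne_of_gt h)]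
        simp only [map_sub, map_zero, map_mul, Complex.conj_conj]
        ring
    -- expansion of the model quadratic form
    have hsumA : ∑ r ∈ Finset.Icc i b, conj (A r) * A r
        = (conj z1 * z1 + conj z2 * z2 + 1)
          - conj (z1 * WW ω i i + z2 * WW ω i i1 + WW ω i b)
            * (z1 * WW ω i i + z2 * WW ω i i1 + WW ω i b) := by
      have expand : ∀ r ∈ Finset.Icc i b, conj (A r) * A r =
          conj z1 * z1 * (conj (MM ω r i) * MM ω r i)
        + conj z1 * z2 * (conj (MM ω r i) * MM ω r i1)
        + conj z1 * (conj (MM ω r i) * MM ω r b)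
        + conj z2 * z1 * (conj (MM ω r i1) * MM ω r i)
        + conj z2 * z2 * (conj (MM ω r i1) * MM ω r i1)
        + conj z2 * (conj (MM ω r i1) * MM ω r b)
        + z1 * (conj (MM ω r b) * MM ω r i)
        + z2 * (conj (MM ω r b) * MM ω r i1)
        + conj (MM ω r b) * MM ω r b := by
        intro r _
        rw [hA]
        simp only [map_add, map_mul]
        ring
      rw [Finset.sum_congr rfl expand]
      simp only [Finset.sum_add_distrib, ← Finset.mul_sum]
      rw [hGmSym i i (le_refl i) hib' (le_refl i) hib',
          hGmSym i i1 (le_refl i) hib' hii1' hi1b',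
          hGmSym i b (le_refl i) hib' hib' (le_refl b),
          hGmSym i1 i hii1' hi1b' (le_refl i) hib',
          hGmSym i1 i1 hii1' hi1b' hii1' hi1b',
          hGmSym i1 b hii1' hi1b' hib' (le_refl b),
          hGmSym b i hib' (le_refl b) (le_refl i) hib',
          hGmSym b i1 hib' (le_refl b) hii1' hi1b',
          hGmSym b b hib' (le_refl b) hib' (le_refl b)]
      simp only [map_add, map_mul]
      simp only [if_neg hii1ne, if_neg hibne, if_neg hi1bne, if_neg (Ne.symm hii1ne),
        if_neg (Ne.symm hibne), if_neg (Ne.symm hi1bne), eq_self_iff_true, if_true,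
        map_one, mul_one, mul_zero, zero_mul, add_zero, zero_add]
      ring
    have hAi : A i = δ := by
      have h4 : A i = z1 * ω i + z2 * (Sa * Sb) + K := by
        rw [hA]
        simp only []
        rw [MM_diag, hMi1]
      rw [h4, hC2]
    -- the full quadratic form
    have hsumG : ∑ r ∈ Finset.Icc i b,
        conj ((inner ℂ (lp.single 2 r (1:ℂ)) (T u) : ℂ)) * (inner ℂ (lp.single 2 r (1:ℂ)) (T u) : ℂ)
          = (conj z1 * z1 + conj z2 * z2 + 1) + 3 * (conj δ * δ) := by
      rw [Finset.sum_congr rfl (fun r hr => by rw [hG r hr])]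
      have expand2 : ∀ r ∈ Finset.Icc i b,
          conj (A r + (if r = i then δ else 0)) * (A r + (if r = i then δ else 0))
            = conj (A r) * A r
              + (if r = i then conj (A r) * δ + conj δ * A r + conj δ * δ else 0) := by
        intro r _
        split_ifs with h
        · simp only [map_add]; ring
        · simp only [map_add, map_zero]; ring
      rw [Finset.sum_congr rfl expand2, Finset.sum_add_distrib, hsumA,
        Finset.sum_ite_eq' (Finset.Icc i b) i
          (fun r => conj (A r) * δ + conj δ * A r + conj δ * δ),
        if_pos (Finset.mem_Icc.mpr ⟨le_refl i, hib'⟩), hAi]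
      have ht0 : z1 * WW ω i i + z2 * WW ω i i1 + WW ω i b = 0 := by
        rw [← hWc]
        exact hC1
      rw [ht0]
      simp only [map_zero, mul_zero, zero_mul]
      ring
    -- extract the real identity
    have h7 : ((∑ r ∈ Finset.Icc i b,
        Complex.normSq ((inner ℂ (lp.single 2 r (1:ℂ)) (T u) : ℂ)) : ℝ) : ℂ)
        = ∑ r ∈ Finset.Icc i b,
            conj ((inner ℂ (lp.single 2 r (1:ℂ)) (T u) : ℂ))
              * (inner ℂ (lp.single 2 r (1:ℂ)) (T u) : ℂ) := by
      push_cast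
      exact Finset.sum_congr rfl fun r _ => (normSq_ofReal_mul _).symm
    have h8 : (conj z1 * z1 + conj z2 * z2 + 1) + 3 * (conj δ * δ)
        = ((Complex.normSq z1 + Complex.normSq z2 + 1 + 3 * Complex.normSq δ : ℝ) : ℂ) := by
      rw [normSq_ofReal_mul, normSq_ofReal_mul, normSq_ofReal_mul]
      push_cast
      ring
    have hreal : ∑ r ∈ Finset.Icc i b,
        Complex.normSq ((inner ℂ (lp.single 2 r (1:ℂ)) (T u) : ℂ))
        = Complex.normSq z1 + Complex.normSq z2 + 1 + 3 * Complex.normSq δ := by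
      exact_mod_cast h7.trans (hsumG.trans h8)
    -- Bessel
    have hbessel := (orthonormal_single).sum_inner_products_le
      (s := Finset.Icc i b) (T u)
    have hb2 : ∑ r ∈ Finset.Icc i b,
        Complex.normSq ((inner ℂ (lp.single 2 r (1:ℂ)) (T u) : ℂ)) ≤ ‖T u‖ ^ 2 := by
      refine le_trans (le_of_eq ?_) hbessel
      exact Finset.sum_congr rfl fun r _ => by
        rw [Complex.normSq_eq_norm_sq]
    -- contraction bound
    have hTu_le : ‖T u‖ ^ 2 ≤ ‖u‖ ^ 2 := by
      have h10 := T.le_opNorm u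
      have h11 : ‖T‖ * ‖u‖ ≤ ‖u‖ := by
        nlinarith [norm_nonneg u]
      exact pow_le_pow_left₀ (norm_nonneg _) (le_trans h10 h11) 2
    -- conclusion
    have hδle : Complex.normSq δ ≤ 0 := by
      rw [hreal] at hb2
      rw [hnormu] at hTu_le
      linarith
    have hδ0 : δ = 0 :=
      Complex.normSq_eq_zero.mp (le_antisymm hδle (Complex.normSq_nonneg δ))
    have : m i b - K = 0 := by rw [← hδ]; exact hδ0
    exact sub_eq_zero.mp this

end Model
end InfContr

open InfContr in
/-- An infinite upper-triangular matrix with diagonal `ωᵢ ∈ 𝔻` and superdiagonal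
`√(1 − |ωᵢ|²)·√(1 − |ω_{i+1}|²)` is the matrix of a contraction on `ℓ²(ℕ*)` iff
all its entries above the superdiagonal are those of the model matrix. -/
theorem infinite_contraction_iff (ω : ℕ+ → ℂ) (hω : ∀ k, ‖ω k‖ < 1)
    (m : ℕ+ → ℕ+ → ℂ)
    (hdiag : ∀ i, m i i = ω i)
    (hsuper : ∀ i : ℕ+, m i (i + 1) =
      ((Real.sqrt (1 - ‖ω i‖ ^ 2) *
        Real.sqrt (1 - ‖ω (i + 1)‖ ^ 2) : ℝ) : ℂ))
    (hlow : ∀ i j : ℕ+, j < i → m i j = 0) :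
    (∃ T : lp (fun _ : ℕ+ => ℂ) 2 →L[ℂ] lp (fun _ : ℕ+ => ℂ) 2, ‖T‖ ≤ 1 ∧
        ∀ i j : ℕ+, (inner ℂ (lp.single 2 i 1) (T (lp.single 2 j 1)) : ℂ) = m i j) ↔
      ∀ i j : ℕ+, m i (i + j) =
        (∏ k ∈ Finset.Ioo i (i + j), -(conj (ω k))) *
          ((Real.sqrt (1 - ‖ω i‖ ^ 2) *
            Real.sqrt (1 - ‖ω (i + j)‖ ^ 2) : ℝ) : ℂ) := by
  constructor
  · rintro ⟨T, hT, hent⟩ i j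
    have h := forced ω hω m T hT hent hdiag (fun i => hsuper i) hlow j i
    rw [h, MM_lt ω (PNat.lt_add_right i j), NN]
    push_cast [sr]
    ring
  · intro hm
    refine ⟨Tclm ω hω, Tclm_norm_le ω hω, fun i j => ?_⟩
    rw [Tclm_entry ω hω i j]
    rcases lt_trichotomy i j with h | h | h
    · obtain ⟨d, hd⟩ : ∃ d : ℕ+, i + d = j := ⟨j - i, PNat.add_sub_of_lt h⟩
      rw [← hd, hm i d, MM_lt ω (PNat.lt_add_right i d), NN]
      push_cast [sr]
      ring
    · subst h
      rw [MM_diag, hdiag]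
    · rw [MM_gt ω h, hlow i j h]
end

section
/- Let H be a complex Hilbert space, ω ∈ 𝔻 a point of the open unit disk, and T a bounded linear operator on H such that Id − conj(ω)·T is invertible. Then T is a contraction (‖T‖ ≤ 1) if and only if M_ω(T) = (ω·Id − T)·(Id − conj(ω)·T)⁻¹ is a contraction (‖M_ω(T)‖ ≤ 1). -/
open scoped ComplexConjugate

/-- The Möbius transform of an operator: `M_ω(T) = (ω·Id − T)·(Id − conj(ω)·T)⁻¹`. -/
noncomputable def mobius {H : Type*} [NormedAddCommGroup H] [InnerProductSpace ℂ H]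
    (ω : ℂ) (T : H →L[ℂ] H) : H →L[ℂ] H :=
  (ω • (1 : H →L[ℂ] H) - T) * Ring.inverse (1 - conj ω • T)

lemma mobius_key {H : Type*} [NormedAddCommGroup H] [InnerProductSpace ℂ H]
    (ω : ℂ) (T : H →L[ℂ] H) (y : H) :
    ‖(1 - conj ω • T) y‖ ^ 2 - ‖(ω • (1 : H →L[ℂ] H) - T) y‖ ^ 2
      = (1 - ‖ω‖ ^ 2) * (‖y‖ ^ 2 - ‖T y‖ ^ 2) := by
  have h1 : (1 - conj ω • T) y = y - conj ω • T y := by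
    simp [ContinuousLinearMap.sub_apply]
  have h2 : (ω • (1 : H →L[ℂ] H) - T) y = ω • y - T y := by
    simp [ContinuousLinearMap.sub_apply]
  rw [h1, h2, @norm_sub_sq ℂ, @norm_sub_sq ℂ]
  rw [inner_smul_right, inner_smul_left, norm_smul, norm_smul]
  simp only [RingHom.id_apply, Complex.norm_conj]
  ring

/-- For `ω ∈ 𝔻`, `T` is a contraction iff `M_ω(T)` is a contraction. -/
theorem contraction_iff_mobius_contraction {H : Type*} [NormedAddCommGroup H]
    [InnerProductSpace ℂ H] [CompleteSpace H] (ω : ℂ) (hω : ‖ω‖ < 1)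
    (T : H →L[ℂ] H) (h : IsUnit (1 - conj ω • T)) :
    ‖T‖ ≤ 1 ↔ ‖mobius ω T‖ ≤ 1 := by
  have hω' : ‖ω‖ ^ 2 < 1 := by
    have : ‖ω‖ < 1 := hω
    nlinarith [norm_nonneg ω]
  set A : H →L[ℂ] H := 1 - conj ω • T with hA
  constructor
  · intro hT
    apply ContinuousLinearMap.opNorm_le_bound _ zero_le_one
    intro x
    rw [one_mul]
    set u := Ring.inverse A x with hu
    have hAu : A u = x := by
      have := Ring.mul_inverse_cancel A h
      calc A u = (A * Ring.inverse A) x := rfl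
        _ = x := by rw [this]; rfl
    have hMx : mobius ω T x = (ω • (1 : H →L[ℂ] H) - T) u := rfl
    have hTu : ‖T u‖ ≤ ‖u‖ := by
      calc ‖T u‖ ≤ ‖T‖ * ‖u‖ := T.le_opNorm u
        _ ≤ 1 * ‖u‖ := by gcongr
        _ = ‖u‖ := one_mul _
    have key := mobius_key ω T u
    rw [hAu] at key
    have hsq : ‖mobius ω T x‖ ^ 2 ≤ ‖x‖ ^ 2 := by
      rw [hMx]
      have h1 : (0:ℝ) ≤ ‖u‖ ^ 2 - ‖T u‖ ^ 2 := by
        nlinarith [norm_nonneg u, norm_nonneg (T u)]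
      have h2 : (0:ℝ) ≤ (1 - ‖ω‖ ^ 2) * (‖u‖ ^ 2 - ‖T u‖ ^ 2) :=
        mul_nonneg (by linarith) h1
      linarith
    exact (pow_le_pow_iff_left₀ (norm_nonneg _) (norm_nonneg _) two_ne_zero).mp hsq
  · intro hM
    apply ContinuousLinearMap.opNorm_le_bound _ zero_le_one
    intro y
    rw [one_mul]
    have hMAy : mobius ω T (A y) = (ω • (1 : H →L[ℂ] H) - T) y := by
      have hinv : Ring.inverse A (A y) = y := by
        have := Ring.inverse_mul_cancel A h
        calc Ring.inverse A (A y) = (Ring.inverse A * A) y := rfl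
          _ = y := by rw [this]; rfl
      show (ω • (1 : H →L[ℂ] H) - T) (Ring.inverse A (A y)) = _
      rw [hinv]
    have hMle : ‖mobius ω T (A y)‖ ≤ ‖A y‖ := by
      calc ‖mobius ω T (A y)‖ ≤ ‖mobius ω T‖ * ‖A y‖ := (mobius ω T).le_opNorm _
        _ ≤ 1 * ‖A y‖ := by gcongr
        _ = ‖A y‖ := one_mul _
    rw [hMAy] at hMle
    have key := mobius_key ω T y
    have hsq : ‖T y‖ ^ 2 ≤ ‖y‖ ^ 2 := by
      nlinarith [norm_nonneg (A y), norm_nonneg ((ω • (1 : H →L[ℂ] H) - T) y)]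
    exact (pow_le_pow_iff_left₀ (norm_nonneg _) (norm_nonneg _) two_ne_zero).mp hsq
end

section
/- Let H be a complex Hilbert space, ω ∈ ℂ, and T a bounded linear operator on H such that Id − conj(ω)·T is invertible. Then for every x ∈ H, setting y = (Id − conj(ω)·T)⁻¹ x, one has ‖x‖² − ‖M_ω(T)x‖² = (1 − |ω|²)·(‖y‖² − ‖Ty‖²), where M_ω(T) = (ω·Id − T)·(Id − conj(ω)·T)⁻¹. -/
open scoped ComplexConjugate

/-- The key identity: for `y = (Id − conj(ω)·T)⁻¹ x`,
`‖x‖² − ‖M_ω(T)x‖² = (1 − |ω|²)(‖y‖² − ‖Ty‖²)`. -/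
theorem norm_sq_sub_mobius_norm_sq {H : Type*} [NormedAddCommGroup H]
    [InnerProductSpace ℂ H] [CompleteSpace H] (ω : ℂ) (T : H →L[ℂ] H)
    (h : IsUnit (1 - conj ω • T)) (x : H) :
    ‖x‖ ^ 2 - ‖mobius ω T x‖ ^ 2 =
      (1 - ‖ω‖ ^ 2) *
        (‖Ring.inverse (1 - conj ω • T) x‖ ^ 2 - ‖T (Ring.inverse (1 - conj ω • T) x)‖ ^ 2) := by
  set y := Ring.inverse (1 - conj ω • T) x with hy
  have hxy : x = y - conj ω • T y := by
    have h1 : ((1 - conj ω • T) * Ring.inverse (1 - conj ω • T)) x = x := by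
      rw [Ring.mul_inverse_cancel _ h]; simp
    calc x = ((1 - conj ω • T) * Ring.inverse (1 - conj ω • T)) x := h1.symm
      _ = y - conj ω • T y := by
          simp [ContinuousLinearMap.mul_apply, ContinuousLinearMap.sub_apply,
            ContinuousLinearMap.smul_apply, hy]
  have hM : mobius ω T x = ω • y - T y := by
    simp [mobius, ContinuousLinearMap.mul_apply, ContinuousLinearMap.sub_apply,
      ContinuousLinearMap.smul_apply, hy]
  rw [hM]
  nth_rewrite 1 [hxy]
  rw [@norm_sub_sq ℂ, @norm_sub_sq ℂ]
  rw [inner_smul_right, inner_smul_left, norm_smul, norm_smul]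
  simp only [Complex.norm_conj, RingHom.id_apply]
  ring
end

section
/- Let n ≥ 3 and let ω₁, …, ω_{n−1} ∈ 𝔻 with ω₂ = 0. Let C be the (n−1) × (n−1) complex matrix with entries c_{i,j} = 0 if j ≤ i, c_{i,i+1} = ω_{i+1}, and c_{i,j} = (∏_{k=i+2}^{j−1} (−conj(ω_k)))·√(1 − |ω_{i+1}|²)·√(1 − |ωⱼ|²) for j ≥ i + 2 (empty product equal to 1). Then C*C is the diagonal matrix whose first two diagonal entries are 0 and whose remaining diagonal entries (in positions 3 through n−1) are all equal to 1. -/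
open scoped ComplexConjugate Matrix

/-- The (n−1)×(n−1) matrix `C` of Fact 1 (indices written 1-based: the entry `c_{i,j}` is
`factMatrixC n ω ⟨i-1,_⟩ ⟨j-1,_⟩`): `c_{i,j} = 0` for `j ≤ i`, `c_{i,i+1} = ω_{i+1}`, and
`c_{i,j} = (∏_{k=i+2}^{j−1} (−conj ω_k))·√(1−|ω_{i+1}|²)·√(1−|ω_j|²)` for `j ≥ i+2`. -/
noncomputable def factMatrixC (n : ℕ) (ω : ℕ → ℂ) : Matrix (Fin (n - 1)) (Fin (n - 1)) ℂ :=
  Matrix.of fun i j =>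
    if (j : ℕ) ≤ (i : ℕ) then 0
    else if (j : ℕ) = (i : ℕ) + 1 then ω ((j : ℕ) + 1)
    else
      (∏ k ∈ Finset.Ico ((i : ℕ) + 3) ((j : ℕ) + 1), -(conj (ω k))) *
        ((Real.sqrt (1 - ‖ω ((i : ℕ) + 2)‖ ^ 2) *
          Real.sqrt (1 - ‖ω ((j : ℕ) + 1)‖ ^ 2) : ℝ) : ℂ)

noncomputable def cEnt (ω : ℕ → ℂ) (i j : ℕ) : ℂ :=
  if j ≤ i then 0
  else if j = i + 1 then ω (j + 1)
  else
    (∏ k ∈ Finset.Ico (i + 3) (j + 1), -(conj (ω k))) *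
      ((Real.sqrt (1 - ‖ω (i + 2)‖ ^ 2) *
        Real.sqrt (1 - ‖ω (j + 1)‖ ^ 2) : ℝ) : ℂ)

lemma factMatrixC_apply (n : ℕ) (ω : ℕ → ℂ) (i j : Fin (n - 1)) :
    factMatrixC n ω i j = cEnt ω (i : ℕ) (j : ℕ) := rfl

lemma tele (p : ℕ → ℝ) (N : ℕ) (h2 : p 2 = 0) :
    ∑ i ∈ Finset.range (N + 1),
      (∏ k ∈ Finset.Ico (i + 3) (N + 3), p k) * (1 - p (i + 2)) = 1 := by
  have h : ∀ i ∈ Finset.range (N + 1),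
      (∏ k ∈ Finset.Ico (i + 3) (N + 3), p k) * (1 - p (i + 2))
        = (∏ k ∈ Finset.Ico (i + 1 + 2) (N + 3), p k)
          - (∏ k ∈ Finset.Ico (i + 2) (N + 3), p k) := by
    intro i hi
    rw [Finset.prod_eq_prod_Ico_succ_bot (by simp at hi; omega : i + 2 < N + 3)]
    have : i + 2 + 1 = i + 1 + 2 := by omega
    rw [this]
    ring
  rw [Finset.sum_congr rfl h,
    Finset.sum_range_sub (fun i => ∏ k ∈ Finset.Ico (i + 2) (N + 3), p k)]
  rw [show N + 1 + 2 = N + 3 by omega, Finset.Ico_self, Finset.prod_empty,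
    Finset.prod_eq_zero (show 2 ∈ Finset.Ico (0 + 2) (N + 3) by simp) h2]
  ring

lemma key (ω : ℕ → ℂ) (m : ℕ) (hω : ∀ k, 1 ≤ k → k ≤ m → ‖ω k‖ < 1)
    (hω2 : ω 2 = 0) (j j' : ℕ) (hj : j < m) (hj' : j' < m) (hle : j ≤ j') :
    ∑ i ∈ Finset.range m, conj (cEnt ω i j) * cEnt ω i j'
      = if j' = j then (if j < 2 then 0 else 1) else 0 := by
  have hsq : ∀ k, 1 ≤ k → k ≤ m →
      (Real.sqrt (1 - ‖ω k‖ ^ 2)) ^ 2 = 1 - ‖ω k‖ ^ 2 := by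
    intro k h1 h2
    exact Real.sq_sqrt (by nlinarith [hω k h1 h2, norm_nonneg (ω k)])
  have hred : ∑ i ∈ Finset.range m, conj (cEnt ω i j) * cEnt ω i j'
      = ∑ i ∈ Finset.range j, conj (cEnt ω i j) * cEnt ω i j' := by
    refine (Finset.sum_subset (Finset.range_subset_range.mpr hj.le) ?_).symm
    intro i _ hi
    rw [cEnt, if_pos (by simp at hi ⊢; omega : j ≤ i), map_zero, zero_mul]
  rw [hred]
  obtain rfl | rfl | ⟨N, rfl⟩ : j = 0 ∨ j = 1 ∨ ∃ N, j = N + 2 :=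
    Or.imp id (Or.imp id fun h => ⟨j - 2, by omega⟩) (by omega : j = 0 ∨ j = 1 ∨ 2 ≤ j)
  · simp only [Finset.range_zero, Finset.sum_empty]
    split_ifs <;> first | rfl | omega
  · have h01 : cEnt ω 0 1 = ω 2 := by rw [cEnt, if_neg (by omega), if_pos rfl]
    simp only [Finset.sum_range_one, h01, hω2, map_zero, zero_mul]
    split_ifs <;> first | rfl | omega
  · -- j = N + 2
    rw [Finset.sum_range_succ]
    have hterm : cEnt ω (N + 1) (N + 2) = ω (N + 3) := by
      rw [cEnt, if_neg (by omega), if_pos rfl]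
    have hsum : ∑ i ∈ Finset.range (N + 1), conj (cEnt ω i (N + 2)) * cEnt ω i j'
        = (∏ k ∈ Finset.Ico (N + 3) (j' + 1), -(conj (ω k))) *
          ((Real.sqrt (1 - ‖ω (N + 3)‖ ^ 2) *
            Real.sqrt (1 - ‖ω (j' + 1)‖ ^ 2) : ℝ) : ℂ) := by
      have hcongr : ∀ i ∈ Finset.range (N + 1),
          conj (cEnt ω i (N + 2)) * cEnt ω i j'
            = (((∏ k ∈ Finset.Ico (i + 3) (N + 3), ‖ω k‖ ^ 2) *
                (1 - ‖ω (i + 2)‖ ^ 2) : ℝ) : ℂ) *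
              ((∏ k ∈ Finset.Ico (N + 3) (j' + 1), -(conj (ω k))) *
                ((Real.sqrt (1 - ‖ω (N + 3)‖ ^ 2) *
                  Real.sqrt (1 - ‖ω (j' + 1)‖ ^ 2) : ℝ) : ℂ)) := by
        intro i hi
        have hiN : i ≤ N := by simp at hi; omega
        have h1 : cEnt ω i (N + 2) =
            (∏ k ∈ Finset.Ico (i + 3) (N + 3), -(conj (ω k))) *
              ((Real.sqrt (1 - ‖ω (i + 2)‖ ^ 2) *
                Real.sqrt (1 - ‖ω (N + 3)‖ ^ 2) : ℝ) : ℂ) := by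
          rw [cEnt, if_neg (by omega), if_neg (by omega)]
        have h2 : cEnt ω i j' =
            (∏ k ∈ Finset.Ico (i + 3) (j' + 1), -(conj (ω k))) *
              ((Real.sqrt (1 - ‖ω (i + 2)‖ ^ 2) *
                Real.sqrt (1 - ‖ω (j' + 1)‖ ^ 2) : ℝ) : ℂ) := by
          rw [cEnt, if_neg (by omega), if_neg (by omega)]
        rw [h1, h2, ← Finset.prod_Ico_consecutive _
          (show i + 3 ≤ N + 3 by omega) (show N + 3 ≤ j' + 1 by omega)]
        rw [map_mul, map_prod]
        simp only [map_neg, Complex.conj_conj, Complex.conj_ofReal]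
        have hA : (∏ k ∈ Finset.Ico (i + 3) (N + 3), -(ω k)) *
            (∏ k ∈ Finset.Ico (i + 3) (N + 3), -(conj (ω k)))
            = ((∏ k ∈ Finset.Ico (i + 3) (N + 3), ‖ω k‖ ^ 2 : ℝ) : ℂ) := by
          rw [← Finset.prod_mul_distrib]
          push_cast
          refine Finset.prod_congr rfl fun k _ => ?_
          rw [neg_mul_neg, mul_comm, Complex.conj_mul']
        have hq' : ((Real.sqrt (1 - ‖ω (i + 2)‖ ^ 2) : ℝ) : ℂ) ^ 2
            = ((1 - ‖ω (i + 2)‖ ^ 2 : ℝ) : ℂ) := by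
          rw [← Complex.ofReal_pow, hsq _ (by omega) (by omega)]
        simp only [Complex.ofReal_mul]
        rw [← hq', ← hA]
        ring
      rw [Finset.sum_congr rfl hcongr, ← Finset.sum_mul, ← Complex.ofReal_sum,
        tele (fun k => ‖ω k‖ ^ 2) N (by simp [hω2])]
      push_cast
      ring
    rw [hsum, hterm]
    by_cases hdiag : j' = N + 2
    · subst hdiag
      rw [show N + 2 + 1 = N + 3 by omega, Finset.Ico_self, Finset.prod_empty, one_mul,
        if_pos rfl, if_neg (by omega)]
      have hnn : (0 : ℝ) ≤ 1 - ‖ω (N + 3)‖ ^ 2 := by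
        nlinarith [hω (N + 3) (by omega) (by omega), norm_nonneg (ω (N + 3))]
      have hc : conj (ω (N + 3)) * ω (N + 3) = ((‖ω (N + 3)‖ ^ 2 : ℝ) : ℂ) := by
        rw [Complex.conj_mul']; norm_cast
      rw [hterm, hc, Real.mul_self_sqrt hnn]
      push_cast
      ring
    · have hgt : N + 2 < j' := by omega
      have h2 : cEnt ω (N + 1) j' =
          (∏ k ∈ Finset.Ico (N + 4) (j' + 1), -(conj (ω k))) *
            ((Real.sqrt (1 - ‖ω (N + 3)‖ ^ 2) *
              Real.sqrt (1 - ‖ω (j' + 1)‖ ^ 2) : ℝ) : ℂ) := by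
        rw [cEnt, if_neg (by omega), if_neg (by omega)]
      rw [h2, if_neg hdiag,
        Finset.prod_eq_prod_Ico_succ_bot (show N + 3 < j' + 1 by omega),
        show N + 3 + 1 = N + 4 by omega]
      ring

/-- Fact 1: if `ω₂ = 0`, then `C*C` is diagonal with first two diagonal entries `0`
and all remaining diagonal entries `1`. -/
theorem conjTranspose_mul_self_eq_diagonal (n : ℕ) (hn : 3 ≤ n) (ω : ℕ → ℂ)
    (hω : ∀ k, 1 ≤ k → k ≤ n - 1 → ‖ω k‖ < 1) (hω2 : ω 2 = 0) :
    (factMatrixC n ω)ᴴ * factMatrixC n ω =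
      Matrix.diagonal (fun i : Fin (n - 1) => if (i : ℕ) < 2 then 0 else 1) := by
  ext j j'
  rw [Matrix.mul_apply, Matrix.diagonal_apply]
  simp only [Matrix.conjTranspose_apply, factMatrixC_apply, Complex.star_def]
  rw [Fin.sum_univ_eq_sum_range (fun i => conj (cEnt ω i (j : ℕ)) * cEnt ω i (j' : ℕ))]
  rcases le_or_gt (j : ℕ) (j' : ℕ) with hle | hlt
  · rw [key ω (n - 1) hω hω2 _ _ j.isLt j'.isLt hle]
    by_cases h : j = j'
    · subst h; simp
    · rw [if_neg (fun hv : (j' : ℕ) = (j : ℕ) => h (Fin.ext hv.symm)), if_neg h]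
  · have hswap : ∑ i ∈ Finset.range (n - 1), conj (cEnt ω i (j : ℕ)) * cEnt ω i (j' : ℕ)
        = conj (∑ i ∈ Finset.range (n - 1), conj (cEnt ω i (j' : ℕ)) * cEnt ω i (j : ℕ)) := by
      rw [map_sum]
      refine Finset.sum_congr rfl fun i _ => ?_
      rw [map_mul, Complex.conj_conj]
      ring
    have hne : ¬ j = j' := fun h => by subst h; exact lt_irrefl _ hlt
    rw [hswap, key ω (n - 1) hω hω2 _ _ j'.isLt j.isLt hlt.le,
      if_neg (fun hv : (j : ℕ) = (j' : ℕ) => hne (Fin.ext hv)), if_neg hne, map_zero]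
end

section
/- Let n ≥ 3 and let ω₁, …, ωₙ ∈ 𝔻 with ω₂ = 0. Let α ∈ ℂ and let Tₙ be the n × n upper-triangular matrix with Tₙ[i,i] = ωᵢ, Tₙ[i,j] = (∏_{k=i+1}^{j−1} (−conj(ω_k)))·√(1 − |ωᵢ|²)·√(1 − |ωⱼ|²) for all i < j with (i,j) ≠ (1,n), Tₙ[1,n] = α, and Tₙ[i,j] = 0 for i > j. Then Tₙ is a contraction if and only if α = 0. -/
open scoped ComplexConjugate

/-- The n×n matrix of Fact 2 (indices written 1-based): the model matrix with eigenvalues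
`ω₁, …, ωₙ`, except that the top-right entry `(1,n)` is replaced by `α`. -/
noncomputable def factMatrixT (n : ℕ) (ω : ℕ → ℂ) (α : ℂ) : Matrix (Fin n) (Fin n) ℂ :=
  Matrix.of fun i j =>
    if (i : ℕ) = (j : ℕ) then ω ((i : ℕ) + 1)
    else if (i : ℕ) < (j : ℕ) then
      if (i : ℕ) = 0 ∧ (j : ℕ) = n - 1 then α
      else
        (∏ k ∈ Finset.Ico ((i : ℕ) + 2) ((j : ℕ) + 1), -(conj (ω k))) *
          ((Real.sqrt (1 - ‖ω ((i : ℕ) + 1)‖ ^ 2) *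
            Real.sqrt (1 - ‖ω ((j : ℕ) + 1)‖ ^ 2) : ℝ) : ℂ)
    else 0


noncomputable def mc (ω : ℕ → ℂ) (k : ℕ) : ℝ := Real.sqrt (1 - ‖ω k‖ ^ 2)

noncomputable def mT (ω : ℕ → ℂ) (i j : ℕ) : ℂ :=
  if i = j then ω i
  else if i < j then (∏ k ∈ Finset.Ico (i+1) j, -(conj (ω k))) * ((mc ω i * mc ω j : ℝ) : ℂ)
  else 0

noncomputable def mr (ω : ℕ → ℂ) (j : ℕ) : ℂ :=
  (∏ k ∈ Finset.Ico 1 j, -(conj (ω k))) * ((mc ω j : ℝ) : ℂ)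

lemma mc_sq (ω : ℕ → ℂ) (k : ℕ) (h : ‖ω k‖ < 1) :
    (mc ω k) ^ 2 = 1 - ‖ω k‖ ^ 2 := by
  have h0 : (0:ℝ) ≤ ‖ω k‖ := norm_nonneg _
  exact Real.sq_sqrt (by nlinarith)

lemma telescope (ω : ℕ → ℂ) (n : ℕ) (hω : ∀ k, 1 ≤ k → k ≤ n → ‖ω k‖ < 1) :
    ∀ j, 1 ≤ j → j ≤ n →
      ∑ i ∈ Finset.Ico 1 j, (mc ω i) ^ 2 * ∏ k ∈ Finset.Ico (i+1) j, ‖ω k‖ ^ 2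
        = 1 - ∏ k ∈ Finset.Ico 1 j, ‖ω k‖ ^ 2 := by
  intro j
  induction j with
  | zero => intro h; omega
  | succ j ih =>
    intro _ hjn
    rcases Nat.eq_or_lt_of_le (Nat.one_le_iff_ne_zero.mpr (Nat.succ_ne_zero j)) with h1 | h1
    · obtain rfl : j = 0 := by omega
      simp
    · have hj1 : 1 ≤ j := by omega
      have hjn' : j ≤ n := by omega
      rw [Finset.sum_Ico_succ_top hj1, Finset.prod_Ico_succ_top hj1]
      have hsplit : ∀ i, i ∈ Finset.Ico 1 j →
          (mc ω i) ^ 2 * ∏ k ∈ Finset.Ico (i+1) (j+1), ‖ω k‖ ^ 2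
            = ((mc ω i) ^ 2 * ∏ k ∈ Finset.Ico (i+1) j, ‖ω k‖ ^ 2)
              * ‖ω j‖ ^ 2 := by
        intro i hi
        rw [Finset.prod_Ico_succ_top (Finset.mem_Ico.mp hi).2]
        ring
      rw [Finset.sum_congr rfl hsplit, ← Finset.sum_mul, ih hj1 hjn']
      have := mc_sq ω j (hω j hj1 hjn')
      simp only [Finset.Ico_self, Finset.prod_empty, mul_one]
      nlinarith [this]

lemma prodconj (ω : ℕ → ℂ) (s : Finset ℕ) :
    (∏ k ∈ s, conj (-(conj (ω k)))) * (∏ k ∈ s, -(conj (ω k)))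
      = ∏ k ∈ s, ((‖ω k‖ : ℂ)) ^ 2 := by
  rw [← Finset.prod_mul_distrib]
  refine Finset.prod_congr rfl fun k _ => ?_
  rw [map_neg, Complex.conj_conj, neg_mul_neg, Complex.mul_conj']

lemma col (ω : ℕ → ℂ) (n : ℕ) (hω : ∀ k, 1 ≤ k → k ≤ n → ‖ω k‖ < 1)
    (j l : ℕ) (hj : 1 ≤ j) (hjl : j ≤ l) (hl : l ≤ n) :
    (∑ i ∈ Finset.Icc 1 n, conj (mT ω i j) * mT ω i l) + conj (mr ω j) * mr ω l
      = if j = l then 1 else 0 := by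
  have hjn : j ≤ n := le_trans hjl hl
  have hzero : ∀ i ∈ Finset.Icc 1 n, i ∉ Finset.Icc 1 j → conj (mT ω i j) * mT ω i l = 0 := by
    intro i hi hni
    simp only [Finset.mem_Icc] at hi hni
    have hji : j < i := by omega
    have h0 : mT ω i j = 0 := by unfold mT; rw [if_neg (by omega), if_neg (by omega)]
    simp [h0]
  rw [← Finset.sum_subset (Finset.Icc_subset_Icc_right hjn) hzero]
  rw [← Finset.Ico_add_one_right_eq_Icc, Finset.sum_Ico_succ_top hj]
  -- generic terms
  have hterm : ∀ i ∈ Finset.Ico 1 j, conj (mT ω i j) * mT ω i l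
      = ((mc ω i ^ 2 * ∏ k ∈ Finset.Ico (i+1) j, ‖ω k‖ ^ 2 : ℝ) : ℂ)
        * (((mc ω j * mc ω l : ℝ) : ℂ) * ∏ k ∈ Finset.Ico j l, -(conj (ω k))) := by
    intro i hi
    obtain ⟨hi1, hij⟩ := Finset.mem_Ico.mp hi
    have hil : i < l := lt_of_lt_of_le hij hjl
    unfold mT
    rw [if_neg (by omega), if_pos hij, if_neg (by omega), if_pos hil]
    rw [← Finset.prod_Ico_consecutive (fun k => -(conj (ω k))) (by omega : i+1 ≤ j) hjl]
    rw [map_mul, map_prod, Complex.conj_ofReal]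
    have hprod := prodconj ω (Finset.Ico (i+1) j)
    push_cast
    linear_combination (((mc ω i : ℝ) : ℂ) * ((mc ω j : ℝ) : ℂ) * ((mc ω i : ℝ) : ℂ)
      * ((mc ω l : ℝ) : ℂ) * (∏ k ∈ Finset.Ico j l, -(conj (ω k)))) * hprod
  rw [Finset.sum_congr rfl hterm, ← Finset.sum_mul]
  rw [← Complex.ofReal_sum, telescope ω n hω j hj hjn]
  -- diagonal term
  have hdiag : mT ω j j = ω j := by unfold mT; rw [if_pos rfl]
  rw [hdiag]
  -- r-term
  have hr : conj (mr ω j) * mr ω l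
      = ((∏ k ∈ Finset.Ico 1 j, ‖ω k‖ ^ 2 : ℝ) : ℂ)
        * (((mc ω j * mc ω l : ℝ) : ℂ) * ∏ k ∈ Finset.Ico j l, -(conj (ω k))) := by
    unfold mr
    rw [← Finset.prod_Ico_consecutive (fun k => -(conj (ω k))) hj hjl]
    rw [map_mul, map_prod, Complex.conj_ofReal]
    have hprod := prodconj ω (Finset.Ico 1 j)
    push_cast
    linear_combination (((mc ω j : ℝ) : ℂ) * ((mc ω l : ℝ) : ℂ) * (∏ k ∈ Finset.Ico j l, -(conj (ω k)))) * hprod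
  rw [hr]
  rcases eq_or_lt_of_le hjl with rfl | hlt
  · rw [if_pos rfl]
    rw [hdiag]
    simp only [Finset.Ico_self, Finset.prod_empty, mul_one]
    have h2 : ((mc ω j : ℝ) : ℂ) ^ 2 = 1 - ((‖ω j‖ : ℝ) : ℂ) ^ 2 := by
      exact_mod_cast congrArg (Complex.ofReal) (mc_sq ω j (hω j hj hjn))
    have h3 := Complex.conj_mul' (ω j)
    push_cast
    linear_combination h3 + h2
  · rw [if_neg (by omega)]
    have hT : mT ω j l = (∏ k ∈ Finset.Ico (j+1) l, -(conj (ω k))) * ((mc ω j * mc ω l : ℝ) : ℂ) := by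
      unfold mT; rw [if_neg (by omega), if_pos hlt]
    rw [hT, Finset.prod_eq_prod_Ico_succ_bot hlt]
    push_cast
    ring


lemma factMatrixT_eq (n : ℕ) (ω : ℕ → ℂ) (hn : 3 ≤ n) (hω2 : ω 2 = 0) (i j : Fin n) :
    factMatrixT n ω 0 i j = mT ω ((i : ℕ) + 1) ((j : ℕ) + 1) := by
  unfold factMatrixT mT mc
  simp only [Matrix.of_apply]
  have hjn := j.isLt
  by_cases h1 : (i : ℕ) = (j : ℕ)
  · simp [h1]
  · by_cases h2 : (i : ℕ) < (j : ℕ)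
    · by_cases hc : (i : ℕ) = 0 ∧ (j : ℕ) = n - 1
      · obtain ⟨hi0, hjN⟩ := hc
        rw [if_neg h1, if_pos h2, if_pos ⟨hi0, hjN⟩, if_neg (by omega), if_pos (by omega)]
        have h2mem : 2 ∈ Finset.Ico ((i : ℕ) + 1 + 1) ((j : ℕ) + 1) := by
          rw [Finset.mem_Ico]; omega
        rw [Finset.prod_eq_zero h2mem (by rw [hω2]; simp)]
        simp
      · rw [if_neg h1, if_pos h2, if_neg hc, if_neg (by omega), if_pos (by omega)]
    · rw [if_neg h1, if_neg h2, if_neg (by omega), if_neg (by omega)]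

lemma col_fin (n : ℕ) (ω : ℕ → ℂ) (hn : 3 ≤ n)
    (hω : ∀ k, 1 ≤ k → k ≤ n → ‖ω k‖ < 1) (hω2 : ω 2 = 0) (j l : Fin n) :
    (∑ i : Fin n, conj (factMatrixT n ω 0 i j) * factMatrixT n ω 0 i l)
      + conj (mr ω ((j : ℕ) + 1)) * mr ω ((l : ℕ) + 1) = if j = l then 1 else 0 := by
  have hsum : ∀ a b : ℕ, 1 ≤ a → a ≤ n → 1 ≤ b → b ≤ n →
      ∑ i : Fin n, conj (mT ω ((i : ℕ) + 1) a) * mT ω ((i : ℕ) + 1) b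
        = ∑ i ∈ Finset.Icc 1 n, conj (mT ω i a) * mT ω i b := by
    intro a b _ _ _ _
    rw [← Finset.Ico_add_one_right_eq_Icc, Finset.sum_Ico_eq_sum_range]
    rw [Fin.sum_univ_eq_sum_range (fun i => conj (mT ω (i + 1) a) * mT ω (i + 1) b)]
    try simp only [Nat.add_sub_cancel]
    exact Finset.sum_congr rfl fun i _ => by rw [Nat.add_comm 1 i]
  have hmain : ∀ a b : Fin n, (a : ℕ) ≤ (b : ℕ) →
      (∑ i : Fin n, conj (factMatrixT n ω 0 i a) * factMatrixT n ω 0 i b)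
        + conj (mr ω ((a : ℕ) + 1)) * mr ω ((b : ℕ) + 1) = if a = b then 1 else 0 := by
    intro a b hab
    simp only [factMatrixT_eq n ω hn hω2]
    rw [hsum ((a : ℕ)+1) ((b : ℕ)+1) (by omega) (by omega : (a:ℕ)+1 ≤ n) (by omega)
      (by omega : (b:ℕ)+1 ≤ n)]
    rw [col ω n hω ((a : ℕ)+1) ((b : ℕ)+1) (by omega) (by omega) (by omega : (b:ℕ)+1 ≤ n)]
    refine if_congr ?_ rfl rfl
    rw [Fin.ext_iff]
    omega
  rcases le_total (j : ℕ) (l : ℕ) with h | h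
  · exact hmain j l h
  · have hlj := hmain l j h
    have e1 : conj ((∑ i : Fin n, conj (factMatrixT n ω 0 i l) * factMatrixT n ω 0 i j)
          + conj (mr ω ((l : ℕ) + 1)) * mr ω ((j : ℕ) + 1))
        = (∑ i : Fin n, conj (factMatrixT n ω 0 i j) * factMatrixT n ω 0 i l)
          + conj (mr ω ((j : ℕ) + 1)) * mr ω ((l : ℕ) + 1) := by
      rw [map_add, map_sum]
      congr 1
      · exact Finset.sum_congr rfl fun i _ => by rw [map_mul, Complex.conj_conj, mul_comm]
      · rw [map_mul, Complex.conj_conj, mul_comm]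
    rw [← e1, hlj]
    by_cases hjl : j = l
    · rw [if_pos hjl.symm, if_pos hjl]; simp
    · rw [if_neg (fun hh => hjl hh.symm), if_neg hjl]; simp

lemma key_sum (n : ℕ) (ω : ℕ → ℂ) (hn : 3 ≤ n)
    (hω : ∀ k, 1 ≤ k → k ≤ n → ‖ω k‖ < 1) (hω2 : ω 2 = 0) (x : Fin n → ℂ) :
    (∑ i : Fin n, (‖(factMatrixT n ω 0).mulVec x i‖ : ℝ) ^ 2)
      ≤ ∑ j : Fin n, (‖x j‖ : ℝ) ^ 2 := by
  set T := factMatrixT n ω 0 with hT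
  set R : Fin n → ℂ := fun j => mr ω ((j : ℕ) + 1) with hR
  have hC : (∑ i : Fin n, conj (T.mulVec x i) * T.mulVec x i)
      + conj (∑ j : Fin n, R j * x j) * (∑ j : Fin n, R j * x j)
        = ∑ j : Fin n, conj (x j) * x j := by
    have h1 : ∑ i : Fin n, conj (T.mulVec x i) * T.mulVec x i
        = ∑ j : Fin n, ∑ l : Fin n, (conj (x j) * x l) * (∑ i : Fin n, conj (T i j) * T i l) := by
      calc ∑ i : Fin n, conj (T.mulVec x i) * T.mulVec x i
          = ∑ i : Fin n, ∑ j : Fin n, ∑ l : Fin n,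
              (conj (x j) * x l) * (conj (T i j) * T i l) := by
            refine Finset.sum_congr rfl fun i _ => ?_
            simp only [Matrix.mulVec, dotProduct, map_sum, map_mul]
            rw [Finset.sum_mul_sum]
            exact Finset.sum_congr rfl fun j _ => Finset.sum_congr rfl fun l _ => by ring
        _ = ∑ j : Fin n, ∑ l : Fin n, (conj (x j) * x l) * (∑ i : Fin n, conj (T i j) * T i l) := by
            rw [Finset.sum_comm]
            refine Finset.sum_congr rfl fun j _ => ?_
            rw [Finset.sum_comm]
            refine Finset.sum_congr rfl fun l _ => ?_
            rw [Finset.mul_sum]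
    have h2 : conj (∑ j : Fin n, R j * x j) * (∑ j : Fin n, R j * x j)
        = ∑ j : Fin n, ∑ l : Fin n, (conj (x j) * x l) * (conj (R j) * R l) := by
      rw [map_sum, Finset.sum_mul_sum]
      exact Finset.sum_congr rfl fun j _ => Finset.sum_congr rfl fun l _ => by
        rw [map_mul]; ring
    rw [h1, h2, ← Finset.sum_add_distrib]
    have h3 : ∀ j : Fin n, (∑ l : Fin n, (conj (x j) * x l) * (∑ i : Fin n, conj (T i j) * T i l))
        + (∑ l : Fin n, (conj (x j) * x l) * (conj (R j) * R l)) = conj (x j) * x j := by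
      intro j
      rw [← Finset.sum_add_distrib]
      have h4 : ∀ l : Fin n, (conj (x j) * x l) * (∑ i : Fin n, conj (T i j) * T i l)
          + (conj (x j) * x l) * (conj (R j) * R l)
            = (conj (x j) * x l) * (if j = l then 1 else 0) := by
        intro l
        rw [← mul_add, col_fin n ω hn hω hω2 j l]
      rw [Finset.sum_congr rfl fun l _ => h4 l]
      simp [mul_ite]
    exact Finset.sum_congr rfl fun j _ => h3 j
  have hre : (∑ i : Fin n, (‖T.mulVec x i‖ : ℝ) ^ 2)
      + (‖∑ j : Fin n, R j * x j‖ : ℝ) ^ 2 = ∑ j : Fin n, (‖x j‖ : ℝ) ^ 2 := by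
    have h := hC
    simp only [Complex.conj_mul'] at h
    have h2 : (((∑ i : Fin n, ‖T.mulVec x i‖ ^ 2) + ‖∑ j : Fin n, R j * x j‖ ^ 2 : ℝ) : ℂ)
        = ((∑ j : Fin n, ‖x j‖ ^ 2 : ℝ) : ℂ) := by
      push_cast
      exact h
    exact_mod_cast h2
  nlinarith [sq_nonneg (‖∑ j : Fin n, R j * x j‖ : ℝ), hre]

/-- Fact 2: if `ω₂ = 0`, the matrix which agrees with the model matrix except possibly at the
top-right corner (where the entry is `α`) is a contraction iff `α = 0`. -/
theorem contraction_iff_corner_zero (n : ℕ) (hn : 3 ≤ n) (ω : ℕ → ℂ)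
    (hω : ∀ k, 1 ≤ k → k ≤ n → ‖ω k‖ < 1) (hω2 : ω 2 = 0) (α : ℂ) :
    ‖Matrix.toEuclideanCLM (𝕜 := ℂ) (factMatrixT n ω α)‖ ≤ 1 ↔ α = 0 := by
  constructor
  · intro hnorm
    have hi0 : 0 < n := by omega
    have hi1 : 1 < n := by omega
    have hiN : n - 1 < n := by omega
    set i0 : Fin n := ⟨0, hi0⟩ with hi0def
    set i1 : Fin n := ⟨1, hi1⟩ with hi1def
    set iN : Fin n := ⟨n - 1, hiN⟩ with hiNdef
    have hne01 : i0 ≠ i1 := by simp [Fin.ext_iff, hi0def, hi1def]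
    have hne0N : i0 ≠ iN := by simp [Fin.ext_iff, hi0def, hiNdef]; omega
    have hne1N : i1 ≠ iN := by simp [Fin.ext_iff, hi1def, hiNdef]; omega
    set v : Fin n → ℂ := fun j => if j = i0 then conj (ω 1) else if j = i1 then ((mc ω 1 : ℝ) : ℂ)
      else if j = iN then conj α else 0 with hvdef
    have hv0 : v i0 = conj (ω 1) := by simp [hvdef]
    have hv1 : v i1 = ((mc ω 1 : ℝ) : ℂ) := by simp [hvdef, Ne.symm hne01]
    have hvN : v iN = conj α := by simp [hvdef, Ne.symm hne0N, Ne.symm hne1N]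
    have hvz : ∀ j : Fin n, j ≠ i0 → j ≠ i1 → j ≠ iN → v j = 0 := by
      intro j h0 h1 hN; simp [hvdef, h0, h1, hN]
    have hmc1 : (mc ω 1) ^ 2 = 1 - ‖ω 1‖ ^ 2 := mc_sq ω 1 (hω 1 le_rfl (by omega))
    have hmc1nonneg : 0 ≤ mc ω 1 := Real.sqrt_nonneg _
    have habs : (0:ℝ) ≤ ‖α‖ := norm_nonneg α
    have htriple : ∀ {M : Type} [AddCommMonoid M] (f : Fin n → M),
        (∀ j : Fin n, j ≠ i0 → j ≠ i1 → j ≠ iN → f j = 0) →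
        ∑ j : Fin n, f j = f i0 + f i1 + f iN := by
      intro M _ f hf
      rw [← Finset.sum_subset (Finset.subset_univ {i0, i1, iN})
        (fun j _ hj => by
          simp only [Finset.mem_insert, Finset.mem_singleton, not_or] at hj
          exact hf j hj.1 hj.2.1 hj.2.2)]
      rw [Finset.sum_insert (by simp [hne01, hne0N]),
        Finset.sum_insert (by simp [hne1N]), Finset.sum_singleton, add_assoc]
    -- matrix entries
    have hA : factMatrixT n ω α i0 i0 = ω 1 := by
      simp [factMatrixT, hi0def]
    have hval0 : ((i0 : Fin n) : ℕ) = 0 := rfl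
    have hval1 : ((i1 : Fin n) : ℕ) = 1 := rfl
    have hvalN : ((iN : Fin n) : ℕ) = n - 1 := rfl
    have hB : factMatrixT n ω α i0 i1 = ((mc ω 1 : ℝ) : ℂ) := by
      unfold factMatrixT
      simp only [Matrix.of_apply, hval0, hval1]
      rw [if_neg (by omega), if_pos (by omega), if_neg (by omega)]
      rw [Finset.Ico_self, Finset.prod_empty, one_mul]
      rw [show (1:ℕ)+1 = 2 by rfl, hω2]
      unfold mc
      norm_num
    have hC : factMatrixT n ω α i0 iN = α := by
      unfold factMatrixT
      simp only [Matrix.of_apply, hval0, hvalN]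
      rw [if_neg (by omega), if_pos (by omega), if_pos (by simp)]
    -- vector x
    set x : EuclideanSpace ℂ (Fin n) := (WithLp.equiv 2 (Fin n → ℂ)).symm v with hxdef
    have hxnorm : ‖x‖ = Real.sqrt (1 + ‖α‖ ^ 2) := by
      rw [EuclideanSpace.norm_eq]
      congr 1
      have : ∀ j : Fin n, j ≠ i0 → j ≠ i1 → j ≠ iN → ‖x j‖ ^ 2 = 0 := by
        intro j h0 h1 hN
        have : x j = v j := rfl
        rw [this, hvz j h0 h1 hN]; simp
      rw [htriple _ this]
      have e0 : ‖x i0‖ ^ 2 = ‖ω 1‖ ^ 2 := by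
        show ‖v i0‖ ^ 2 = _
        rw [hv0, Complex.norm_conj]
      have e1 : ‖x i1‖ ^ 2 = 1 - ‖ω 1‖ ^ 2 := by
        show ‖v i1‖ ^ 2 = _
        rw [hv1, Complex.norm_real, Real.norm_eq_abs, abs_of_nonneg hmc1nonneg, hmc1]
      have eN : ‖x iN‖ ^ 2 = ‖α‖ ^ 2 := by
        show ‖v iN‖ ^ 2 = _
        rw [hvN, Complex.norm_conj]
      rw [e0, e1, eN]; ring
    -- the key coordinate
    have hcoord : (Matrix.toEuclideanCLM (𝕜 := ℂ) (factMatrixT n ω α) x) i0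
        = ((1 + ‖α‖ ^ 2 : ℝ) : ℂ) := by
      have : (Matrix.toEuclideanCLM (𝕜 := ℂ) (factMatrixT n ω α) x) i0
          = ∑ j : Fin n, factMatrixT n ω α i0 j * v j := rfl
      rw [this, htriple _ (fun j h0 h1 hN => by rw [hvz j h0 h1 hN, mul_zero])]
      rw [hA, hB, hC, hv0, hv1, hvN, Complex.mul_conj', Complex.mul_conj']
      have hreal : ‖ω 1‖ ^ 2 + mc ω 1 * mc ω 1 + ‖α‖ ^ 2
          = 1 + ‖α‖ ^ 2 := by nlinarith [hmc1]
      rw [← hreal]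
      push_cast
      ring
    -- norm bounds
    have hylb : 1 + ‖α‖ ^ 2 ≤ ‖Matrix.toEuclideanCLM (𝕜 := ℂ) (factMatrixT n ω α) x‖ := by
      have h1 : ‖Matrix.toEuclideanCLM (𝕜 := ℂ) (factMatrixT n ω α) x i0‖
          = 1 + ‖α‖ ^ 2 := by
        rw [hcoord, Complex.norm_real, Real.norm_eq_abs, abs_of_nonneg (by positivity)]
      have h2 : ‖Matrix.toEuclideanCLM (𝕜 := ℂ) (factMatrixT n ω α) x i0‖ ^ 2
          ≤ ∑ i : Fin n, ‖Matrix.toEuclideanCLM (𝕜 := ℂ) (factMatrixT n ω α) x i‖ ^ 2 :=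
        Finset.single_le_sum (f := fun i => ‖Matrix.toEuclideanCLM (𝕜 := ℂ) (factMatrixT n ω α) x i‖ ^ 2)
          (fun i _ => sq_nonneg _) (Finset.mem_univ i0)
      calc 1 + ‖α‖ ^ 2
          = ‖Matrix.toEuclideanCLM (𝕜 := ℂ) (factMatrixT n ω α) x i0‖ := h1.symm
        _ = Real.sqrt (‖Matrix.toEuclideanCLM (𝕜 := ℂ) (factMatrixT n ω α) x i0‖ ^ 2) :=
            (Real.sqrt_sq (norm_nonneg _)).symm
        _ ≤ Real.sqrt (∑ i : Fin n, ‖Matrix.toEuclideanCLM (𝕜 := ℂ) (factMatrixT n ω α) x i‖ ^ 2) :=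
            Real.sqrt_le_sqrt h2
        _ = ‖Matrix.toEuclideanCLM (𝕜 := ℂ) (factMatrixT n ω α) x‖ :=
            (EuclideanSpace.norm_eq _).symm
    have hyub : ‖Matrix.toEuclideanCLM (𝕜 := ℂ) (factMatrixT n ω α) x‖
        ≤ Real.sqrt (1 + ‖α‖ ^ 2) := by
      calc ‖Matrix.toEuclideanCLM (𝕜 := ℂ) (factMatrixT n ω α) x‖
          ≤ ‖Matrix.toEuclideanCLM (𝕜 := ℂ) (factMatrixT n ω α)‖ * ‖x‖ :=
          ContinuousLinearMap.le_opNorm _ x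
        _ ≤ 1 * ‖x‖ := mul_le_mul_of_nonneg_right hnorm (norm_nonneg x)
        _ = Real.sqrt (1 + ‖α‖ ^ 2) := by rw [one_mul, hxnorm]
    have hkey : 1 + ‖α‖ ^ 2 ≤ Real.sqrt (1 + ‖α‖ ^ 2) := le_trans hylb hyub
    have hsq : (1 + ‖α‖ ^ 2) ^ 2 ≤ 1 + ‖α‖ ^ 2 := by
      have := pow_le_pow_left₀ (by positivity) hkey 2
      rwa [Real.sq_sqrt (by positivity)] at this
    have : ‖α‖ = 0 := by nlinarith [habs]
    exact norm_eq_zero.mp this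
  · rintro rfl
    apply ContinuousLinearMap.opNorm_le_bound _ zero_le_one
    intro x
    rw [one_mul]
    have hcoord : ∀ i : Fin n, (Matrix.toEuclideanCLM (𝕜 := ℂ) (factMatrixT n ω 0) x) i
        = (factMatrixT n ω 0).mulVec x i := fun i => rfl
    rw [EuclideanSpace.norm_eq, EuclideanSpace.norm_eq]
    apply Real.sqrt_le_sqrt
    calc ∑ i : Fin n, ‖(Matrix.toEuclideanCLM (𝕜 := ℂ) (factMatrixT n ω 0) x) i‖ ^ 2
        = ∑ i : Fin n, ‖(factMatrixT n ω 0).mulVec x i‖ ^ 2 := by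
          exact Finset.sum_congr rfl fun i _ => by rw [hcoord]
      _ ≤ ∑ j : Fin n, ‖x j‖ ^ 2 := key_sum n ω hn hω hω2 x
end

section
/- Let n ≥ 2, let ω ∈ 𝔻, and let T be an n × n complex upper-triangular matrix whose diagonal entries ω₁, …, ωₙ all lie in 𝔻. Then Id − conj(ω)·T is invertible, the matrix M_ω(T) = (ω·Id − T)·(Id − conj(ω)·T)⁻¹ is upper triangular, its diagonal entries are M_ω(T)[i,i] = (ω − ωᵢ)/(1 − conj(ω)·ωᵢ), and its superdiagonal entries are M_ω(T)[i,i+1] = T[i,i+1]·(|ω|² − 1)/((1 − conj(ω)·ωᵢ)·(1 − conj(ω)·ω_{i+1})) for 1 ≤ i ≤ n − 1. -/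
open scoped ComplexConjugate

/-- The Möbius transform of a square matrix: `M_ω(T) = (ω·Id − T)·(Id − conj(ω)·T)⁻¹`. -/
noncomputable def mobiusMatrix {n : ℕ} (ω : ℂ) (T : Matrix (Fin n) (Fin n) ℂ) :
    Matrix (Fin n) (Fin n) ℂ :=
  (ω • (1 : Matrix (Fin n) (Fin n) ℂ) - T) * (1 - conj ω • T)⁻¹

private lemma tri_mul_diag {n : ℕ} (M N : Matrix (Fin n) (Fin n) ℂ)
    (hM : ∀ i j : Fin n, j < i → M i j = 0) (hN : ∀ i j : Fin n, j < i → N i j = 0)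
    (i : Fin n) : (M * N) i i = M i i * N i i := by
  rw [Matrix.mul_apply]
  refine Finset.sum_eq_single i (fun k _ hk => ?_) (by simp)
  rcases lt_or_gt_of_ne hk with h | h
  · rw [hM i k h, zero_mul]
  · rw [hN k i h, mul_zero]

private lemma tri_mul_super {n : ℕ} (M N : Matrix (Fin n) (Fin n) ℂ)
    (hM : ∀ i j : Fin n, j < i → M i j = 0) (hN : ∀ i j : Fin n, j < i → N i j = 0)
    (i j : Fin n) (hij : (j : ℕ) = (i : ℕ) + 1) :
    (M * N) i j = M i i * N i j + M i j * N j j := by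
  have hij' : i < j := by rw [Fin.lt_def]; omega
  have hne : i ≠ j := ne_of_lt hij'
  rw [Matrix.mul_apply]
  rw [← Finset.sum_subset (Finset.subset_univ ({i, j} : Finset (Fin n)))
    (fun k _ hk => ?_), Finset.sum_pair hne]
  simp only [Finset.mem_insert, Finset.mem_singleton, not_or] at hk
  obtain ⟨hki, hkj⟩ := hk
  rcases lt_trichotomy k i with h | h | h
  · rw [hM i k h, zero_mul]
  · exact absurd h hki
  · have : j < k := by
      rw [Fin.lt_def] at h ⊢
      rcases Nat.lt_or_ge (j : ℕ) (k : ℕ) with h' | h'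
      · exact h'
      · exfalso; apply hkj; apply Fin.ext; omega
    rw [hN k j this, mul_zero]

/-- For an upper-triangular matrix `T` with diagonal entries in `𝔻` and `ω ∈ 𝔻`,
`Id − conj(ω)·T` is invertible, `M_ω(T)` is upper triangular, its diagonal entries are
`(ω − ωᵢ)/(1 − conj(ω)·ωᵢ)`, and its superdiagonal entries are
`T[i,i+1]·(|ω|² − 1)/((1 − conj(ω)·ωᵢ)(1 − conj(ω)·ω_{i+1}))`. -/
theorem mobiusMatrix_triangular {n : ℕ} (hn : 2 ≤ n) (ω : ℂ) (hω : ‖ω‖ < 1)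
    (T : Matrix (Fin n) (Fin n) ℂ)
    (hdiag : ∀ i, ‖T i i‖ < 1)
    (hlow : ∀ i j : Fin n, j < i → T i j = 0) :
    IsUnit (1 - conj ω • T) ∧
    (∀ i j : Fin n, j < i → mobiusMatrix ω T i j = 0) ∧
    (∀ i : Fin n, mobiusMatrix ω T i i = (ω - T i i) / (1 - conj ω * T i i)) ∧
    (∀ i j : Fin n, (j : ℕ) = (i : ℕ) + 1 →
      mobiusMatrix ω T i j =
        T i j * ((((‖ω‖ ^ 2 : ℝ) : ℂ) - 1) /
          ((1 - conj ω * T i i) * (1 - conj ω * T j j)))) := by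
  set B : Matrix (Fin n) (Fin n) ℂ := 1 - conj ω • T with hB
  set A : Matrix (Fin n) (Fin n) ℂ := ω • (1 : Matrix (Fin n) (Fin n) ℂ) - T with hA
  have hBe : ∀ i j : Fin n, B i j = (if i = j then 1 else 0) - conj ω * T i j := by
    intro i j
    simp [hB, Matrix.sub_apply, Matrix.one_apply, Matrix.smul_apply]
  have hAe : ∀ i j : Fin n, A i j = (if i = j then ω else 0) - T i j := by
    intro i j
    simp [hA, Matrix.sub_apply, Matrix.one_apply, Matrix.smul_apply, mul_ite]
  have hBd : ∀ i : Fin n, B i i = 1 - conj ω * T i i := fun i => by simp [hBe]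
  have hAd : ∀ i : Fin n, A i i = ω - T i i := fun i => by simp [hAe]
  have hBlow : ∀ i j : Fin n, j < i → B i j = 0 := by
    intro i j h
    rw [hBe, hlow i j h, if_neg (ne_of_gt h), mul_zero, sub_zero]
  have hAlow : ∀ i j : Fin n, j < i → A i j = 0 := by
    intro i j h
    rw [hAe, hlow i j h, if_neg (ne_of_gt h), sub_zero]
  have hBdne : ∀ i : Fin n, B i i ≠ 0 := by
    intro i
    rw [hBd]
    intro h
    have h1 : conj ω * T i i = 1 := by linear_combination -h
    have h2 : ‖conj ω * T i i‖ = 1 := by rw [h1]; simp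
    rw [norm_mul, Complex.norm_conj] at h2
    have := hdiag i
    have h3 := norm_nonneg ω
    have h4 := norm_nonneg (T i i)
    nlinarith
  have hdetB : B.det = ∏ i, B i i := Matrix.det_of_upperTriangular hBlow
  have hdetu : IsUnit B.det := by
    rw [hdetB, isUnit_iff_ne_zero]
    exact Finset.prod_ne_zero_iff.2 fun i _ => hBdne i
  have hunit : IsUnit B := (Matrix.isUnit_iff_isUnit_det B).2 hdetu
  haveI : Invertible B := hunit.invertible
  have hXlow : ∀ i j : Fin n, j < i → B⁻¹ i j = 0 := by
    have := Matrix.blockTriangular_inv_of_blockTriangular (b := (id : Fin n → Fin n))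
      (M := B) (fun i j h => hBlow i j h)
    exact fun i j h => this h
  have hBX : B * B⁻¹ = 1 := Matrix.mul_nonsing_inv B hdetu
  have hXd : ∀ i : Fin n, B⁻¹ i i = (B i i)⁻¹ := by
    intro i
    have h1 : (B * B⁻¹) i i = B i i * B⁻¹ i i := tri_mul_diag B B⁻¹ hBlow hXlow i
    rw [hBX, Matrix.one_apply_eq] at h1
    exact (inv_eq_of_mul_eq_one_right h1.symm).symm
  have hXs : ∀ i j : Fin n, (j : ℕ) = (i : ℕ) + 1 →
      B⁻¹ i j = conj ω * T i j / (B i i * B j j) := by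
    intro i j hij
    have hij' : i < j := by rw [Fin.lt_def]; omega
    have hne : i ≠ j := ne_of_lt hij'
    have h1 : (B * B⁻¹) i j = B i i * B⁻¹ i j + B i j * B⁻¹ j j :=
      tri_mul_super B B⁻¹ hBlow hXlow i j hij
    rw [hBX, Matrix.one_apply_ne hne, hXd j] at h1
    have hBij : B i j = -(conj ω * T i j) := by rw [hBe, if_neg hne]; ring
    rw [hBij] at h1
    rw [eq_div_iff (mul_ne_zero (hBdne i) (hBdne j))]
    have hj' : (B j j)⁻¹ * B j j = 1 := inv_mul_cancel₀ (hBdne j)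
    linear_combination (-(B j j)) * h1 + (conj ω * T i j) * hj'
  refine ⟨hunit, fun i j h => ?_, fun i => ?_, fun i j hij => ?_⟩
  · exact Matrix.BlockTriangular.mul (fun i j h => hAlow i j h)
      (fun i j h => hXlow i j h) h
  · rw [mobiusMatrix, ← hB, ← hA, tri_mul_diag A B⁻¹ hAlow hXlow i, hXd i, hAd i, hBd i,
      div_eq_mul_inv]
  · have hij' : i < j := by rw [Fin.lt_def]; omega
    have hne : i ≠ j := ne_of_lt hij'
    have habs : ((‖ω‖ ^ 2 : ℝ) : ℂ) = conj ω * ω := by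
      rw [Complex.sq_norm, mul_comm, Complex.mul_conj]
    rw [mobiusMatrix, ← hB, ← hA, tri_mul_super A B⁻¹ hAlow hXlow i j hij,
      hXs i j hij, hXd j, hAd i, habs]
    have hAij : A i j = -T i j := by rw [hAe, if_neg hne]; ring
    rw [hAij, hBd i, hBd j]
    have h1 := hBdne i
    have h2 := hBdne j
    rw [hBd i] at h1
    rw [hBd j] at h2
    field_simp
    linear_combination (T i j) * inv_mul_cancel₀ (show 1 - T i i * conj ω ≠ 0 by rwa [mul_comm])
end

section
/- Let (ω_k)_{k≥1} be any sequence in the open unit disk 𝔻, and let m : ℕ* × ℕ* → ℂ be the infinite matrix with m(i,j) = ωⱼ if i = j, m(i,j) = (∏_{k=i+1}^{j−1} (−conj(ω_k)))·√(1 − |ωᵢ|²)·√(1 − |ωⱼ|²) if i < j (empty product equal to 1), and m(i,j) = 0 if i > j. Then there exists a bounded linear operator T on ℓ²(ℕ*) with ‖T‖ ≤ 1 such that ⟨T e_j, e_i⟩ = m(i,j) for all i, j ≥ 1, where (e_k)_{k≥1} is the canonical orthonormal basis of ℓ²(ℕ*). -/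
open scoped ComplexConjugate

namespace ModelAux

noncomputable def sr (ω : ℕ+ → ℂ) (j : ℕ+) : ℝ := Real.sqrt (1 - ‖ω j‖ ^ 2)
noncomputable def A (ω : ℕ+ → ℂ) (k : ℕ) : ℂ := if h : 0 < k then -(conj (ω ⟨k, h⟩)) else 1
noncomputable def xN (x : ℕ+ → ℂ) (n : ℕ) : ℂ := if h : 0 < n then x ⟨n, h⟩ else 0
noncomputable def srN (ω : ℕ+ → ℂ) (n : ℕ) : ℝ := if h : 0 < n then sr ω ⟨n, h⟩ else 0
noncomputable def f (ω x : ℕ+ → ℂ) (n j : ℕ) : ℂ :=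
  if n < j then (∏ k ∈ Finset.Ioo n j, A ω k) * ((srN ω j : ℂ) * xN x j) else 0
noncomputable def b (ω x : ℕ+ → ℂ) (n : ℕ) : ℂ := ∑' j, f ω x n j
noncomputable def aw (ω : ℕ+ → ℂ) (n j : ℕ) : ℝ :=
  if n < j then (∏ k ∈ Finset.Ioo n j, ‖A ω k‖) * srN ω j else 0
noncomputable def Q (ω : ℕ+ → ℂ) (n t : ℕ) : ℝ := ∏ k ∈ Finset.Ioo n t, ‖A ω k‖ ^ 2
noncomputable def yv (ω x : ℕ+ → ℂ) (n : ℕ) : ℂ :=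
  ω n.succPNat * x n.succPNat + (sr ω n.succPNat : ℂ) * b ω x (n + 1)

variable {ω x : ℕ+ → ℂ}

lemma srN_nonneg (ω : ℕ+ → ℂ) (n : ℕ) : 0 ≤ srN ω n := by
  unfold srN; split
  · exact Real.sqrt_nonneg _
  · exact le_refl 0

lemma aw_nonneg (ω : ℕ+ → ℂ) (n j : ℕ) : 0 ≤ aw ω n j := by
  unfold aw; split
  · exact mul_nonneg (Finset.prod_nonneg fun k _ => norm_nonneg _) (srN_nonneg ω j)
  · exact le_refl 0

lemma Q_nonneg (ω : ℕ+ → ℂ) (n t : ℕ) : 0 ≤ Q ω n t :=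
  Finset.prod_nonneg fun k _ => sq_nonneg _

lemma absA (k : ℕ) (hk : 0 < k) : ‖A ω k‖ = ‖ω ⟨k, hk⟩‖ := by
  rw [A, dif_pos hk, norm_neg, Complex.norm_conj]

section withHω
variable (hω : ∀ k, ‖ω k‖ < 1)
include hω

lemma one_sub_sq_nonneg (j : ℕ+) : 0 ≤ 1 - ‖ω j‖ ^ 2 := by
  have := hω j
  nlinarith [norm_nonneg (ω j)]

lemma sr_sq (j : ℕ+) : sr ω j ^ 2 = 1 - ‖ω j‖ ^ 2 :=
  Real.sq_sqrt (one_sub_sq_nonneg hω j)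

lemma srN_sq {n : ℕ} (hn : 0 < n) : srN ω n ^ 2 = 1 - ‖A ω n‖ ^ 2 := by
  rw [srN, dif_pos hn]; exact (sr_sq hω ⟨n, hn⟩).trans (by rw [absA n hn])

lemma norm_f (x : ℕ+ → ℂ) (n j : ℕ) : ‖f ω x n j‖ = aw ω n j * ‖xN x j‖ := by
  unfold f aw
  split
  · rw [norm_mul, norm_mul, norm_prod, Complex.norm_of_nonneg (srN_nonneg ω j), mul_assoc]
  · simp

end withHω

lemma Ioo_succ_insert {n M : ℕ} (h : n < M) :
    Finset.Ioo n (M + 1) = insert M (Finset.Ioo n M) := by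
  ext k; simp only [Finset.mem_Ioo, Finset.mem_insert]; omega

lemma Ioo_self_succ (n : ℕ) : Finset.Ioo n (n + 1) = ∅ := by
  ext k; simp only [Finset.mem_Ioo, Finset.notMem_empty, iff_false]; omega

lemma sum_aw_sq (hω : ∀ k, ‖ω k‖ < 1) :
    ∀ M n : ℕ, n < M → ∑ j ∈ Finset.Ioo n M, aw ω n j ^ 2 = 1 - Q ω n M := by
  intro M
  induction M with
  | zero => intro n hn; omega
  | succ M ih =>
    intro n hn
    rcases Nat.lt_or_ge n M with hM | hM
    · have hQ : Q ω n (M + 1) = Q ω n M * ‖A ω M‖ ^ 2 := by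
        rw [Q, Q, Ioo_succ_insert hM, Finset.prod_insert (by simp)]
        ring
      rw [Ioo_succ_insert hM, Finset.sum_insert (by simp), ih n hM, hQ]
      have hM0 : 0 < M := by omega
      have haw : aw ω n M ^ 2 = Q ω n M * srN ω M ^ 2 := by
        rw [aw, if_pos hM, mul_pow, Q, Finset.prod_pow]
      rw [haw, srN_sq hω hM0]
      ring
    · have : n = M := by omega
      subst this
      rw [Ioo_self_succ, Q, Ioo_self_succ]
      simp

lemma sum_range_aw_sq_le (hω : ∀ k, ‖ω k‖ < 1) (n N : ℕ) :
    ∑ j ∈ Finset.range N, aw ω n j ^ 2 ≤ 1 := by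
  have hsub : ∑ j ∈ Finset.range N, aw ω n j ^ 2 = ∑ j ∈ Finset.Ioo n N, aw ω n j ^ 2 := by
    refine (Finset.sum_subset (fun j hj => Finset.mem_range.2 (Finset.mem_Ioo.1 hj).2) ?_).symm
    intro j hj hj'
    have : ¬ n < j := by
      have h1 := Finset.mem_range.1 hj
      have h2 : ¬ (n < j ∧ j < N) := by
        intro hc; exact hj' (Finset.mem_Ioo.2 hc)
      omega
    rw [aw, if_neg this]
    norm_num
  rw [hsub]
  rcases Nat.lt_or_ge n N with h | h
  · rw [sum_aw_sq hω N n h]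
    have := Q_nonneg ω n N
    linarith
  · rw [Finset.Ioo_eq_empty (by omega)]
    norm_num

lemma summable_aw_sq (hω : ∀ k, ‖ω k‖ < 1) (n : ℕ) :
    Summable (fun j => aw ω n j ^ 2) :=
  summable_of_sum_range_le (fun j => sq_nonneg _) (sum_range_aw_sq_le hω n)

lemma tsum_aw_sq_le (hω : ∀ k, ‖ω k‖ < 1) (n : ℕ) :
    ∑' j, aw ω n j ^ 2 ≤ 1 :=
  Real.tsum_le_of_sum_range_le (fun j => sq_nonneg _) (sum_range_aw_sq_le hω n)


section withX
variable (hω : ∀ k, ‖ω k‖ < 1)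
variable (hx : Summable (fun n : ℕ => ‖xN x n‖ ^ 2))
include hω hx

lemma summable_awx (n : ℕ) : Summable (fun j => aw ω n j * ‖xN x j‖) := by
  refine Summable.of_nonneg_of_le
    (fun j => mul_nonneg (aw_nonneg ω n j) (norm_nonneg _))
    (fun j => ?_) (((summable_aw_sq hω n).add hx).div_const 2)
  have h1 := aw_nonneg ω n j
  have h2 : (0:ℝ) ≤ ‖xN x j‖ := norm_nonneg _
  nlinarith [sq_nonneg (aw ω n j - ‖xN x j‖)]

lemma summable_norm_f (n : ℕ) : Summable (fun j => ‖f ω x n j‖) := by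
  have := summable_awx hω hx n
  simpa [norm_f hω x] using this

lemma summable_f (n : ℕ) : Summable (f ω x n) :=
  (summable_norm_f hω hx n).of_norm

lemma b_rec (n : ℕ) :
    b ω x n = (srN ω (n + 1) : ℂ) * xN x (n + 1) + A ω (n + 1) * b ω x (n + 1) := by
  classical
  have hpt : ∀ j, f ω x n j =
      if j = n + 1 then (srN ω (n + 1) : ℂ) * xN x (n + 1)
      else A ω (n + 1) * f ω x (n + 1) j := by
    intro j
    by_cases hj : j = n + 1
    · subst hj
      rw [if_pos rfl, f, if_pos (by omega), Ioo_self_succ]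
      simp
    · rw [if_neg hj, f, f]
      by_cases hnj : n < j
      · have hnj' : n + 1 < j := by omega
        rw [if_pos hnj, if_pos hnj']
        have hins : Finset.Ioo n j = insert (n + 1) (Finset.Ioo (n + 1) j) := by
          ext k; simp only [Finset.mem_Ioo, Finset.mem_insert]; omega
        rw [hins, Finset.prod_insert (by simp), mul_assoc]
      · have : ¬ n + 1 < j := by omega
        rw [if_neg hnj, if_neg this, mul_zero]
  have hsum : Summable (fun j => if j = n + 1 then (srN ω (n + 1) : ℂ) * xN x (n + 1)
      else A ω (n + 1) * f ω x (n + 1) j) := by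
    have := summable_f hω hx n
    exact this.congr hpt
  calc b ω x n = ∑' j, (if j = n + 1 then (srN ω (n + 1) : ℂ) * xN x (n + 1)
      else A ω (n + 1) * f ω x (n + 1) j) := tsum_congr hpt
    _ = (srN ω (n + 1) : ℂ) * xN x (n + 1)
        + ∑' j, (if j = n + 1 then 0 else
            if j = n + 1 then (srN ω (n + 1) : ℂ) * xN x (n + 1)
            else A ω (n + 1) * f ω x (n + 1) j) := by
          rw [Summable.tsum_eq_add_tsum_ite hsum (n + 1), if_pos rfl]
    _ = (srN ω (n + 1) : ℂ) * xN x (n + 1) + A ω (n + 1) * b ω x (n + 1) := by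
          congr 1
          rw [b, ← tsum_mul_left]
          apply tsum_congr
          intro j
          by_cases hj : j = n + 1
          · subst hj
            rw [if_pos rfl, f, if_neg (by omega), mul_zero]
          · rw [if_neg hj, if_neg hj]

end withX


lemma normSq_step (w xx bb : ℂ) (t : ℝ) (h : t ^ 2 = 1 - Complex.normSq w) :
    Complex.normSq (w * xx + t * bb) + Complex.normSq (t * xx - conj w * bb)
      = Complex.normSq xx + Complex.normSq bb := by
  simp only [Complex.normSq_apply, Complex.add_re, Complex.add_im, Complex.sub_re,
    Complex.sub_im, Complex.mul_re, Complex.mul_im, Complex.conj_re, Complex.conj_im,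
    Complex.ofReal_re, Complex.ofReal_im] at *
  nlinarith [h]


noncomputable def tailI (x : ℕ+ → ℂ) (n : ℕ) : ℝ :=
  ∑' j, (if n < j then ‖xN x j‖ ^ 2 else 0)

section withX2
variable (hω : ∀ k, ‖ω k‖ < 1)
variable (hx : Summable (fun n : ℕ => ‖xN x n‖ ^ 2))
include hx

lemma summable_tx (n : ℕ) : Summable (fun j => if n < j then ‖xN x j‖ ^ 2 else 0) := by
  refine Summable.of_nonneg_of_le (fun j => ?_) (fun j => ?_) hx
  · split <;> positivity
  · split
    · exact le_refl _
    · positivity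

lemma tailI_nonneg (n : ℕ) : 0 ≤ tailI x n := by
  refine tsum_nonneg fun j => ?_
  split <;> positivity

include hω

lemma normsq_b_le (n : ℕ) : ‖b ω x n‖ ^ 2 ≤ tailI x n := by
  have hb : ‖b ω x n‖ ≤ ∑' j, aw ω n j * ‖xN x j‖ := by
    calc ‖b ω x n‖ ≤ ∑' j, ‖f ω x n j‖ := norm_tsum_le_tsum_norm (summable_norm_f hω hx n)
      _ = ∑' j, aw ω n j * ‖xN x j‖ := tsum_congr fun j => norm_f hω x n j
  have hS : ∑' j, aw ω n j * ‖xN x j‖ ≤ Real.sqrt (tailI x n) := by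
    refine Summable.tsum_le_of_sum_le (summable_awx hω hx n) fun F => ?_
    have key : (∑ j ∈ F, aw ω n j * ‖xN x j‖) ^ 2 ≤ tailI x n := by
      have heq : ∑ j ∈ F, aw ω n j * ‖xN x j‖
          = ∑ j ∈ F, aw ω n j * (if n < j then ‖xN x j‖ else 0) := by
        refine Finset.sum_congr rfl fun j _ => ?_
        by_cases hnj : n < j
        · rw [if_pos hnj]
        · rw [if_neg hnj, aw, if_neg hnj, zero_mul, zero_mul]
      rw [heq]
      calc (∑ j ∈ F, aw ω n j * (if n < j then ‖xN x j‖ else 0)) ^ 2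
          ≤ (∑ j ∈ F, aw ω n j ^ 2) * ∑ j ∈ F, (if n < j then ‖xN x j‖ else 0) ^ 2 :=
            Finset.sum_mul_sq_le_sq_mul_sq F _ _
        _ ≤ 1 * tailI x n := by
            refine mul_le_mul ?_ ?_ ?_ zero_le_one
            · exact le_trans (Summable.sum_le_tsum F (fun j _ => sq_nonneg _)
                (summable_aw_sq hω n)) (tsum_aw_sq_le hω n)
            · refine le_trans (le_of_eq ?_) (Summable.sum_le_tsum F
                (fun j _ => by split <;> positivity) (summable_tx hx n))
              refine Finset.sum_congr rfl fun j _ => ?_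
              by_cases hnj : n < j
              · rw [if_pos hnj, if_pos hnj]
              · rw [if_neg hnj, if_neg hnj]
                norm_num
            · exact Finset.sum_nonneg fun j _ => by split <;> positivity
        _ = tailI x n := one_mul _
    have hFnn : 0 ≤ ∑ j ∈ F, aw ω n j * ‖xN x j‖ :=
      Finset.sum_nonneg fun j _ => mul_nonneg (aw_nonneg ω n j) (norm_nonneg _)
    exact (Real.le_sqrt hFnn (tailI_nonneg hx n)).mpr key
  have hbn : ‖b ω x n‖ ≤ Real.sqrt (tailI x n) := le_trans hb hS
  calc ‖b ω x n‖ ^ 2 ≤ Real.sqrt (tailI x n) ^ 2 :=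
        pow_le_pow_left₀ (norm_nonneg _) hbn 2
    _ = tailI x n := Real.sq_sqrt (tailI_nonneg hx n)

lemma step (n : ℕ) :
    ‖yv ω x n‖ ^ 2 + ‖b ω x n‖ ^ 2 = ‖xN x (n + 1)‖ ^ 2 + ‖b ω x (n + 1)‖ ^ 2 := by
  have hb := b_rec hω hx n
  have hsq : sr ω n.succPNat ^ 2 = 1 - Complex.normSq (ω n.succPNat) := by
    rw [sr_sq hω, Complex.normSq_eq_norm_sq]
  have key := normSq_step (ω n.succPNat) (x n.succPNat) (b ω x (n + 1)) (sr ω n.succPNat) hsq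
  have h1 : xN x (n + 1) = x n.succPNat := by rw [xN, dif_pos (Nat.succ_pos n)]; rfl
  have h2 : (srN ω (n + 1) : ℂ) = ((sr ω n.succPNat : ℝ) : ℂ) := by
    rw [srN, dif_pos (Nat.succ_pos n)]; rfl
  have h3 : A ω (n + 1) = -(conj (ω n.succPNat)) := by
    rw [A, dif_pos (Nat.succ_pos n)]; rfl
  have hbn : b ω x n = (sr ω n.succPNat : ℂ) * x n.succPNat
      - conj (ω n.succPNat) * b ω x (n + 1) := by
    rw [hb, h1, h2, h3]; ring
  simp only [yv, hbn, h1]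
  simpa only [← Complex.normSq_eq_norm_sq, Complex.sq_norm] using key
end withX2


section withX3
variable (hω : ∀ k, ‖ω k‖ < 1)
variable (hx : Summable (fun n : ℕ => ‖xN x n‖ ^ 2))
include hω hx

lemma sum_step (N : ℕ) :
    ∑ n ∈ Finset.range N, ‖yv ω x n‖ ^ 2
      = (∑ n ∈ Finset.range N, ‖xN x (n + 1)‖ ^ 2)
        + (‖b ω x N‖ ^ 2 - ‖b ω x 0‖ ^ 2) := by
  have h : ∀ n, ‖yv ω x n‖ ^ 2
      = ‖xN x (n + 1)‖ ^ 2 + (‖b ω x (n + 1)‖ ^ 2 - ‖b ω x n‖ ^ 2) := by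
    intro n
    have := step hω hx n
    linarith
  calc ∑ n ∈ Finset.range N, ‖yv ω x n‖ ^ 2
      = ∑ n ∈ Finset.range N, (‖xN x (n + 1)‖ ^ 2
          + (‖b ω x (n + 1)‖ ^ 2 - ‖b ω x n‖ ^ 2)) := Finset.sum_congr rfl fun n _ => h n
    _ = (∑ n ∈ Finset.range N, ‖xN x (n + 1)‖ ^ 2)
        + ∑ n ∈ Finset.range N, (‖b ω x (n + 1)‖ ^ 2 - ‖b ω x n‖ ^ 2) :=
          Finset.sum_add_distrib
    _ = _ := by rw [Finset.sum_range_sub (fun n => ‖b ω x n‖ ^ 2)]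

lemma sum_range_yv_le (N : ℕ) :
    ∑ n ∈ Finset.range N, ‖yv ω x n‖ ^ 2 ≤ (∑' n, ‖xN x n‖ ^ 2) + tailI x N := by
  have h1 : ∑ n ∈ Finset.range N, ‖xN x (n + 1)‖ ^ 2 ≤ ∑' n, ‖xN x n‖ ^ 2 := by
    have : ∑ n ∈ Finset.range (N + 1), ‖xN x n‖ ^ 2
        = (∑ n ∈ Finset.range N, ‖xN x (n + 1)‖ ^ 2) + ‖xN x 0‖ ^ 2 :=
      Finset.sum_range_succ' _ N
    have h2 : ∑ n ∈ Finset.range (N + 1), ‖xN x n‖ ^ 2 ≤ ∑' n, ‖xN x n‖ ^ 2 :=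
      Summable.sum_le_tsum _ (fun n _ => sq_nonneg _) hx
    nlinarith [sq_nonneg ‖xN x 0‖]
  have h2 := normsq_b_le hω hx N
  have h3 : (0:ℝ) ≤ ‖b ω x 0‖ ^ 2 := sq_nonneg _
  rw [sum_step hω hx N]
  linarith

lemma tailI_eq (n : ℕ) :
    tailI x n = (∑' j, ‖xN x j‖ ^ 2) - ∑ j ∈ Finset.range (n + 1), ‖xN x j‖ ^ 2 := by
  have key : ∑ j ∈ Finset.range (n + 1), ‖xN x j‖ ^ 2 + tailI x n = ∑' j, ‖xN x j‖ ^ 2 := by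
    have hshift : tailI x n = ∑' k, ‖xN x (k + (n + 1))‖ ^ 2 := by
      rw [tailI]
      have hinj : Function.Injective (fun k : ℕ => k + (n + 1)) := add_left_injective _
      have hsupp : Function.support (fun j => if n < j then ‖xN x j‖ ^ 2 else 0)
          ⊆ Set.range (fun k : ℕ => k + (n + 1)) := by
        intro j hj
        by_cases hnj : n < j
        · exact ⟨j - (n + 1), by simp; omega⟩
        · simp [if_neg hnj] at hj
      have := Function.Injective.tsum_eq hinj hsupp
      rw [← this]
      refine tsum_congr fun k => ?_
      rw [if_pos (by omega)]
    rw [hshift]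
    exact Summable.sum_add_tsum_nat_add (n + 1) hx
  linarith

lemma sum_range_yv_le' (N : ℕ) :
    ∑ n ∈ Finset.range N, ‖yv ω x n‖ ^ 2 ≤ ∑' n, ‖xN x n‖ ^ 2 := by
  refine le_of_forall_pos_le_add fun ε hε => ?_
  have htends := hx.hasSum.tendsto_sum_nat
  have hev : ∀ᶠ m in Filter.atTop,
      (∑' n, ‖xN x n‖ ^ 2) - ε < ∑ j ∈ Finset.range m, ‖xN x j‖ ^ 2 :=
    htends.eventually_const_lt (by linarith)
  obtain ⟨m, hm, hmN⟩ := (hev.and (Filter.eventually_ge_atTop (N + 1))).exists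
  set M := m - 1 with hM
  have hm1 : m = M + 1 := by omega
  have hMN : N ≤ M := by omega
  have hchain : ∑ n ∈ Finset.range N, ‖yv ω x n‖ ^ 2
      ≤ ∑ n ∈ Finset.range M, ‖yv ω x n‖ ^ 2 :=
    Finset.sum_le_sum_of_subset_of_nonneg (Finset.range_subset_range.2 hMN)
      (fun n _ _ => sq_nonneg _)
  have hbound := sum_range_yv_le hω hx M
  have htail : tailI x M ≤ ε := by
    rw [tailI_eq hω hx M]
    rw [hm1] at hm
    linarith
  linarith

lemma summable_yv_sq : Summable (fun n => ‖yv ω x n‖ ^ 2) :=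
  summable_of_sum_range_le (fun n => sq_nonneg _) (sum_range_yv_le' hω hx)

lemma tsum_yv_sq_le : ∑' n, ‖yv ω x n‖ ^ 2 ≤ ∑' n, ‖xN x n‖ ^ 2 :=
  Real.tsum_le_of_sum_range_le (fun n => sq_nonneg _) (sum_range_yv_le' hω hx)

end withX3


lemma xN_coe (g : ℕ+ → ℂ) (i : ℕ+) : xN g (i : ℕ) = g i := by
  obtain ⟨i, hi⟩ := i
  rw [xN]
  exact dif_pos hi

lemma xN_comp (g : ℕ+ → ℂ) :
    (fun n => ‖xN g n‖ ^ 2) ∘ ((↑) : ℕ+ → ℕ) = fun i : ℕ+ => ‖g i‖ ^ 2 := by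
  funext i
  simp only [Function.comp_apply, xN_coe]

lemma xN_vanish (g : ℕ+ → ℂ) :
    ∀ n ∉ Set.range ((↑) : ℕ+ → ℕ), ‖xN g n‖ ^ 2 = 0 := by
  intro n hn
  have hn0 : ¬ 0 < n := by
    intro h
    exact hn ⟨⟨n, h⟩, rfl⟩
  rw [xN, dif_neg hn0]
  simp

lemma summable_xN_iff (g : ℕ+ → ℂ) :
    Summable (fun n : ℕ => ‖xN g n‖ ^ 2) ↔ Summable (fun i : ℕ+ => ‖g i‖ ^ 2) := by
  rw [← xN_comp g]
  exact (Function.Injective.summable_iff PNat.coe_injective (xN_vanish g)).symm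

lemma tsum_xN (g : ℕ+ → ℂ) : ∑' n : ℕ, ‖xN g n‖ ^ 2 = ∑' i : ℕ+, ‖g i‖ ^ 2 := by
  rw [← Function.Injective.tsum_eq PNat.coe_injective
    (Function.support_subset_iff'.2 (xN_vanish g))]
  exact (tsum_congr fun i => by rw [xN_coe]).symm

lemma rpow_toReal_two (t : ℝ) : t ^ (2 : ENNReal).toReal = t ^ 2 := by
  have h : ((2 : ENNReal)).toReal = ((2:ℕ):ℝ) := by norm_num
  rw [h, Real.rpow_natCast]

lemma memℓp_two_iff' (g : ℕ+ → ℂ) :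
    Memℓp g 2 ↔ Summable (fun i : ℕ+ => ‖g i‖ ^ 2) := by
  have h0 : (0:ℝ) < (2 : ENNReal).toReal := by norm_num
  rw [memℓp_gen_iff h0]
  constructor <;> intro h
  · exact h.congr fun i => rpow_toReal_two _
  · exact h.congr fun i => (rpow_toReal_two _).symm

noncomputable def yvp (ω x : ℕ+ → ℂ) : ℕ+ → ℂ := fun i => yv ω x i.natPred

lemma yvp_eq (i : ℕ+) : yvp ω x i = ω i * x i + (sr ω i : ℂ) * b ω x (i : ℕ) := by
  rw [yvp, yv, PNat.succPNat_natPred, PNat.natPred_add_one]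

lemma yvp_comp :
    (fun n => ‖yv ω x n‖ ^ 2) ∘ (Equiv.pnatEquivNat : ℕ+ → ℕ)
      = fun i : ℕ+ => ‖yvp ω x i‖ ^ 2 := by
  funext i
  rfl

lemma pnat_range_univ :
    Set.range (Equiv.pnatEquivNat : ℕ+ → ℕ) = Set.univ :=
  Equiv.pnatEquivNat.surjective.range_eq

section withX4
variable (hω : ∀ k, ‖ω k‖ < 1)
variable (hx : Summable (fun n : ℕ => ‖xN x n‖ ^ 2))
include hω hx

lemma summable_yvp_sq : Summable (fun i : ℕ+ => ‖yvp ω x i‖ ^ 2) := by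
  rw [← yvp_comp]
  refine (Function.Injective.summable_iff Equiv.pnatEquivNat.injective ?_).2
    (summable_yv_sq hω hx)
  intro n hn
  rw [pnat_range_univ] at hn
  exact absurd (Set.mem_univ n) hn

lemma tsum_yvp_sq : ∑' i : ℕ+, ‖yvp ω x i‖ ^ 2 = ∑' n : ℕ, ‖yv ω x n‖ ^ 2 := by
  rw [← Function.Injective.tsum_eq
    (Equiv.pnatEquivNat.injective : Function.Injective (Equiv.pnatEquivNat : ℕ+ → ℕ))
    (by rw [pnat_range_univ]; exact Set.subset_univ _)]
  rfl

lemma memℓp_yvp : Memℓp (yvp ω x) 2 :=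
  (memℓp_two_iff' _).2 (summable_yvp_sq hω hx)

lemma tsum_yvp_le : ∑' i : ℕ+, ‖yvp ω x i‖ ^ 2 ≤ ∑' i : ℕ+, ‖x i‖ ^ 2 := by
  rw [tsum_yvp_sq hω hx, ← tsum_xN x]
  exact tsum_yv_sq_le hω hx

end withX4


lemma srN_coe (ω : ℕ+ → ℂ) (j : ℕ+) : srN ω (j : ℕ) = sr ω j := by
  obtain ⟨j, hj⟩ := j
  rw [srN]
  exact dif_pos hj

lemma A_coe (ω : ℕ+ → ℂ) (k : ℕ+) : A ω (k : ℕ) = -(conj (ω k)) := by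
  obtain ⟨k, hk⟩ := k
  rw [A]
  exact dif_pos hk

lemma prod_transfer (ω : ℕ+ → ℂ) (i j : ℕ+) :
    (∏ k ∈ Finset.Ioo i j, -(conj (ω k))) = ∏ k ∈ Finset.Ioo (i:ℕ) (j:ℕ), A ω k := by
  refine Finset.prod_bij (fun (k : ℕ+) (_ : k ∈ Finset.Ioo i j) => (k : ℕ)) ?_ ?_ ?_ ?_
  · intro a ha
    rw [Finset.mem_Ioo] at ha ⊢
    exact ⟨(PNat.coe_lt_coe _ _).2 ha.1, (PNat.coe_lt_coe _ _).2 ha.2⟩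
  · intro a₁ h₁ a₂ h₂ h
    exact PNat.coe_injective h
  · intro n hn
    rw [Finset.mem_Ioo] at hn
    have hn0 : 0 < n := lt_of_le_of_lt (Nat.zero_le _) hn.1
    refine ⟨Nat.toPNat n hn0, ?_, rfl⟩
    rw [Finset.mem_Ioo]
    constructor
    · exact (PNat.coe_lt_coe _ _).1 hn.1
    · exact (PNat.coe_lt_coe _ _).1 hn.2
  · intro a ha
    rw [A_coe]

lemma xN_add (x1 x2 : ℕ+ → ℂ) (n : ℕ) : xN (x1 + x2) n = xN x1 n + xN x2 n := by
  unfold xN; split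
  · rfl
  · simp

lemma xN_smul (c : ℂ) (x1 : ℕ+ → ℂ) (n : ℕ) : xN (c • x1) n = c * xN x1 n := by
  unfold xN; split
  · rfl
  · simp

lemma f_add (x1 x2 : ℕ+ → ℂ) (n j : ℕ) :
    f ω (x1 + x2) n j = f ω x1 n j + f ω x2 n j := by
  unfold f; split
  · rw [xN_add]; ring
  · simp

lemma f_smul (c : ℂ) (x1 : ℕ+ → ℂ) (n j : ℕ) : f ω (c • x1) n j = c * f ω x1 n j := by
  unfold f; split
  · rw [xN_smul]; ring
  · simp

lemma b_add (hω : ∀ k, ‖ω k‖ < 1) {x1 x2 : ℕ+ → ℂ}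
    (hx1 : Summable (fun n : ℕ => ‖xN x1 n‖ ^ 2))
    (hx2 : Summable (fun n : ℕ => ‖xN x2 n‖ ^ 2)) (n : ℕ) :
    b ω (x1 + x2) n = b ω x1 n + b ω x2 n := by
  rw [b, b, b, ← Summable.tsum_add (summable_f hω hx1 n) (summable_f hω hx2 n)]
  exact tsum_congr fun j => f_add x1 x2 n j

lemma b_smul (c : ℂ) (x1 : ℕ+ → ℂ) (n : ℕ) : b ω (c • x1) n = c * b ω x1 n := by
  rw [b, b, ← tsum_mul_left]
  exact tsum_congr fun j => f_smul c x1 n j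

lemma yvp_add (hω : ∀ k, ‖ω k‖ < 1) {x1 x2 : ℕ+ → ℂ}
    (hx1 : Summable (fun n : ℕ => ‖xN x1 n‖ ^ 2))
    (hx2 : Summable (fun n : ℕ => ‖xN x2 n‖ ^ 2)) (i : ℕ+) :
    yvp ω (x1 + x2) i = yvp ω x1 i + yvp ω x2 i := by
  simp only [yvp_eq, b_add hω hx1 hx2, Pi.add_apply]
  ring

lemma yvp_smul (c : ℂ) (x1 : ℕ+ → ℂ) (i : ℕ+) :
    yvp ω (c • x1) i = c * yvp ω x1 i := by
  simp only [yvp_eq, b_smul, Pi.smul_apply, smul_eq_mul]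
  ring

lemma b_single (hω : ∀ k, ‖ω k‖ < 1) (j : ℕ+) (n : ℕ) :
    b ω (↑(lp.single 2 j (1:ℂ)) : ℕ+ → ℂ) n
      = if n < (j:ℕ) then (∏ k ∈ Finset.Ioo n (j:ℕ), A ω k) * (srN ω (j:ℕ) : ℂ) else 0 := by
  classical
  set g : ℕ+ → ℂ := (↑(lp.single 2 j (1:ℂ)) : ℕ+ → ℂ) with hg
  have hgj : g j = 1 := lp.single_apply_self 2 j 1
  have hgne : ∀ i : ℕ+, i ≠ j → g i = 0 := fun i hi => lp.single_apply_ne 2 j 1 hi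
  have hzero : ∀ m : ℕ, m ≠ (j:ℕ) → f ω g n m = 0 := by
    intro m hm
    rw [f]
    split
    · have hxm : xN g m = 0 := by
        rw [xN]
        split
        · next h =>
            refine hgne ⟨m, h⟩ fun hc => hm ?_
            exact congrArg (fun t : ℕ+ => (t : ℕ)) hc
        · rfl
      rw [hxm, mul_zero, mul_zero]
    · rfl
  rw [b, tsum_eq_single ((j:ℕ)) hzero, f]
  split
  · rw [xN_coe, hgj, mul_one]
  · rfl

end ModelAux


open ModelAux in
/-- For any sequence `(ω_k)` in the open unit disk, the infinite model matrix defines a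
contraction on `ℓ²(ℕ*)`. -/
theorem infinite_modelMatrix_contraction (ω : ℕ+ → ℂ)
    (hω : ∀ k, ‖ω k‖ < 1)
    (m : ℕ+ → ℕ+ → ℂ)
    (hm : ∀ i j : ℕ+, m i j =
      if i = j then ω i
      else if i < j then
        (∏ k ∈ Finset.Ioo i j, -(conj (ω k))) *
          ((Real.sqrt (1 - ‖ω i‖ ^ 2) *
            Real.sqrt (1 - ‖ω j‖ ^ 2) : ℝ) : ℂ)
      else 0) :
    ∃ T : lp (fun _ : ℕ+ => ℂ) 2 →L[ℂ] lp (fun _ : ℕ+ => ℂ) 2, ‖T‖ ≤ 1 ∧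
      ∀ i j : ℕ+, (inner ℂ (lp.single 2 i 1) (T (lp.single 2 j 1)) : ℂ) = m i j := by
  classical
  have hxz : ∀ z : lp (fun _ : ℕ+ => ℂ) 2,
      Summable (fun n : ℕ => ‖xN (↑z : ℕ+ → ℂ) n‖ ^ 2) := fun z =>
    (summable_xN_iff (↑z : ℕ+ → ℂ)).2 ((memℓp_two_iff' (↑z : ℕ+ → ℂ)).1 (lp.memℓp z))
  set L : lp (fun _ : ℕ+ => ℂ) 2 →ₗ[ℂ] lp (fun _ : ℕ+ => ℂ) 2 :=
    { toFun := fun z => ⟨yvp ω (↑z : ℕ+ → ℂ), memℓp_yvp hω (hxz z)⟩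
      map_add' := by
        intro z w
        apply Subtype.ext
        funext i
        have hco : ((z + w : lp (fun _ : ℕ+ => ℂ) 2) : ℕ+ → ℂ)
            = (↑z : ℕ+ → ℂ) + (↑w : ℕ+ → ℂ) := lp.coeFn_add z w
        show yvp ω (↑(z + w) : ℕ+ → ℂ) i = yvp ω (↑z : ℕ+ → ℂ) i + yvp ω (↑w : ℕ+ → ℂ) i
        rw [hco]
        exact yvp_add hω (hxz z) (hxz w) i
      map_smul' := by
        intro c z
        apply Subtype.ext
        funext i
        have hco : ((c • z : lp (fun _ : ℕ+ => ℂ) 2) : ℕ+ → ℂ)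
            = c • (↑z : ℕ+ → ℂ) := lp.coeFn_smul c z
        show yvp ω (↑(c • z) : ℕ+ → ℂ) i = c * yvp ω (↑z : ℕ+ → ℂ) i
        rw [hco]
        exact yvp_smul c _ i } with hL
  have hLapply : ∀ (z : lp (fun _ : ℕ+ => ℂ) 2) (i : ℕ+),
      (↑(L z) : ℕ+ → ℂ) i = yvp ω (↑z : ℕ+ → ℂ) i := fun z i => rfl
  have hbound : ∀ z : lp (fun _ : ℕ+ => ℂ) 2, ‖L z‖ ≤ 1 * ‖z‖ := by
    intro z
    rw [one_mul]
    have h2 : (0:ℝ) < (2 : ENNReal).toReal := by norm_num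
    have hy := lp.norm_rpow_eq_tsum h2 (L z)
    have hx' := lp.norm_rpow_eq_tsum h2 z
    simp only [rpow_toReal_two] at hy hx'
    have hle : ‖L z‖ ^ 2 ≤ ‖z‖ ^ 2 := by
      rw [hy, hx']
      calc ∑' i : ℕ+, ‖(↑(L z) : ℕ+ → ℂ) i‖ ^ 2
          = ∑' i : ℕ+, ‖yvp ω (↑z : ℕ+ → ℂ) i‖ ^ 2 := tsum_congr fun i => by rw [hLapply]
        _ ≤ ∑' i : ℕ+, ‖(↑z : ℕ+ → ℂ) i‖ ^ 2 := tsum_yvp_le hω (hxz z)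
    nlinarith [norm_nonneg (L z), norm_nonneg z]
  refine ⟨L.mkContinuous 1 hbound, L.mkContinuous_norm_le zero_le_one hbound, ?_⟩
  intro i j
  have hTapply : ((L.mkContinuous 1 hbound) (lp.single 2 j 1)) = L (lp.single 2 j 1) := rfl
  rw [hTapply, lp.inner_single_left]
  have hinner : (inner ℂ (1:ℂ) ((↑(L (lp.single 2 j 1)) : ℕ+ → ℂ) i) : ℂ)
      = (↑(L (lp.single 2 j 1)) : ℕ+ → ℂ) i := by
    simp [RCLike.inner_apply]
  rw [hinner, hLapply, yvp_eq, b_single hω j (i:ℕ)]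
  have hgj : (↑(lp.single 2 j (1:ℂ)) : ℕ+ → ℂ) j = 1 := lp.single_apply_self 2 j 1
  have hgne : ∀ i' : ℕ+, i' ≠ j → (↑(lp.single 2 j (1:ℂ)) : ℕ+ → ℂ) i' = 0 :=
    fun i' hi' => lp.single_apply_ne 2 j 1 hi'
  rcases lt_trichotomy i j with hij | hij | hij
  · -- i < j
    have hne : i ≠ j := ne_of_lt hij
    have hlt : (i:ℕ) < (j:ℕ) := (PNat.coe_lt_coe _ _).2 hij
    rw [hgne i hne, if_pos hlt, hm i j, if_neg hne, if_pos hij, prod_transfer, srN_coe,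
      mul_zero, zero_add, Complex.ofReal_mul]
    simp only [sr]
    ring
  · -- i = j
    subst hij
    rw [hgj, if_neg (lt_irrefl _), hm i i, if_pos rfl, mul_zero, add_zero, mul_one]
  · -- j < i
    have hne : i ≠ j := ne_of_gt hij
    have hnlt : ¬ (i:ℕ) < (j:ℕ) := by
      have := (PNat.coe_lt_coe _ _).2 hij
      omega
    rw [hgne i hne, if_neg hnlt, hm i j, if_neg hne, if_neg (not_lt_of_gt hij),
      mul_zero, mul_zero, add_zero]
end
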